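/- arXiv:1106.5708 — 9 statements merged into one kernel-verified Lean document; each statement's English description precedes it below -/
import Mathlib

section
/- Fix q ∈ ℂ with q ≠ 0 and integers k ≥ 1, r ≥ 1, and let A = A(ℂP²_θ). Given complex matrices B₁, B₂ ∈ M_{k×k}(ℂ), I ∈ M_{k×r}(ℂ), J ∈ M_{r×k}(ℂ), define the block matrices over A: σ ∈ M_{(2k+r)×k}(A), the vertical stack of the three blocks B₁w₃ + q·w₁·1_k, B₂w₃ + q⁻¹·w₂·1_k, and J·w₃; and τ ∈ M_{k×(2k+r)}(A), the horizontal row of the three blocks −q⁻²B₂w₃ − q⁻¹·w₂·1_k, B₁w₃ + q⁻¹·w₁·1_k, and I·w₃ (where for a complex matrix M and a ∈ A, M·a denotes the matrix over A with entries M_{uv}a). Then τ·σ = (B₁B₂ − q⁻²B₂B₁ + IJ)·w₃² in M_{k×k}(A). In particular, τ·σ = 0 if and only if the braided complex ADHM equation B₁B₂ − q⁻²B₂B₁ + IJ = 0 holds. -/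
noncomputable section

open FreeAlgebra

/-- The relations of the homogeneous coordinate algebra `A(ℂP²_θ)`:
`w₁w₂ = q² w₂w₁`, `w₁w₃ = w₃w₁`, `w₂w₃ = w₃w₂` (generators indexed `0, 1, 2`). -/
inductive P2Rel (q : ℂ) : FreeAlgebra ℂ (Fin 3) → FreeAlgebra ℂ (Fin 3) → Prop
  | r12 : P2Rel q (ι ℂ 0 * ι ℂ 1) (q ^ 2 • (ι ℂ 1 * ι ℂ 0))
  | r13 : P2Rel q (ι ℂ 0 * ι ℂ 2) (ι ℂ 2 * ι ℂ 0)
  | r23 : P2Rel q (ι ℂ 1 * ι ℂ 2) (ι ℂ 2 * ι ℂ 1)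

/-- The homogeneous coordinate algebra `A = A(ℂP²_θ)`. -/
abbrev P2Alg (q : ℂ) := RingQuot (P2Rel q)

/-- The generators `w₁, w₂, w₃` of `A(ℂP²_θ)` (indexed by `0, 1, 2`). -/
def wP2 (q : ℂ) (i : Fin 3) : P2Alg q := RingQuot.mkAlgHom ℂ (P2Rel q) (ι ℂ i)

/-- For a complex matrix `M` and an algebra element `a`, the matrix `M·a` with
entries `M_{uv} a`. -/
def cMat {m n : Type*} {A : Type*} [Semiring A] [Algebra ℂ A]
    (M : Matrix m n ℂ) (a : A) : Matrix m n A :=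
  M.map fun c => algebraMap ℂ A c * a

/-- The monad differential `σ = σ_{(B,I,J)}`, the vertical stack of the blocks
`B₁w₃ + q·w₁·1_k`, `B₂w₃ + q⁻¹·w₂·1_k` and `J·w₃`. -/
def σMat (q : ℂ) (k r : ℕ) (B1 B2 : Matrix (Fin k) (Fin k) ℂ)
    (I : Matrix (Fin k) (Fin r) ℂ) (J : Matrix (Fin r) (Fin k) ℂ) :
    Matrix (Fin k ⊕ (Fin k ⊕ Fin r)) (Fin k) (P2Alg q) :=
  Matrix.fromRows
    (cMat B1 (wP2 q 2) + cMat (q • (1 : Matrix (Fin k) (Fin k) ℂ)) (wP2 q 0))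
    (Matrix.fromRows
      (cMat B2 (wP2 q 2) + cMat (q⁻¹ • (1 : Matrix (Fin k) (Fin k) ℂ)) (wP2 q 1))
      (cMat J (wP2 q 2)))

/-- The monad differential `τ = τ_{(B,I,J)}`, the horizontal row of the blocks
`−q⁻²B₂w₃ − q⁻¹·w₂·1_k`, `B₁w₃ + q⁻¹·w₁·1_k` and `I·w₃`. -/
def τMat (q : ℂ) (k r : ℕ) (B1 B2 : Matrix (Fin k) (Fin k) ℂ)
    (I : Matrix (Fin k) (Fin r) ℂ) (J : Matrix (Fin r) (Fin k) ℂ) :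
    Matrix (Fin k) (Fin k ⊕ (Fin k ⊕ Fin r)) (P2Alg q) :=
  Matrix.fromCols
    (cMat (-(q ^ 2)⁻¹ • B2) (wP2 q 2) + cMat (-q⁻¹ • (1 : Matrix (Fin k) (Fin k) ℂ)) (wP2 q 1))
    (Matrix.fromCols
      (cMat B1 (wP2 q 2) + cMat (q⁻¹ • (1 : Matrix (Fin k) (Fin k) ℂ)) (wP2 q 0))
      (cMat I (wP2 q 2)))


lemma w02 (q : ℂ) : wP2 q 0 * wP2 q 2 = wP2 q 2 * wP2 q 0 := by
  have := RingQuot.mkAlgHom_rel ℂ (P2Rel.r13 (q := q)); simpa [wP2, map_mul] using this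

lemma w12 (q : ℂ) : wP2 q 1 * wP2 q 2 = wP2 q 2 * wP2 q 1 := by
  have := RingQuot.mkAlgHom_rel ℂ (P2Rel.r23 (q := q)); simpa [wP2, map_mul] using this

lemma w01 (q : ℂ) : wP2 q 0 * wP2 q 1 = q ^ 2 • (wP2 q 1 * wP2 q 0) := by
  have := RingQuot.mkAlgHom_rel ℂ (P2Rel.r12 (q := q)); simpa [wP2, map_mul, map_smul] using this

section
variable {m n p : Type*} [Fintype n] {A : Type*} [Semiring A] [Algebra ℂ A]
set_option linter.unusedSectionVars false

lemma cMat_mul (M : Matrix m n ℂ) (N : Matrix n p ℂ) (a b : A) :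
    cMat M a * cMat N b = cMat (M * N) (a * b) := by
  ext i j
  simp only [cMat, Matrix.mul_apply, Matrix.map_apply, map_sum, Finset.sum_mul]
  refine Finset.sum_congr rfl fun v _ => ?_
  rw [map_mul, mul_assoc, mul_assoc, ← mul_assoc a, ← Algebra.commutes (N v j) a, mul_assoc]

lemma cMat_add (M N : Matrix m n ℂ) (a : A) :
    cMat (M + N) a = cMat M a + cMat N a := by
  ext i j; simp [cMat, add_mul]

lemma cMat_asmul (c : ℂ) (M : Matrix m n ℂ) (a : A) :
    cMat M (c • a) = cMat (c • M) a := by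
  ext i j
  simp only [cMat, Matrix.map_apply, Matrix.smul_apply, smul_eq_mul, map_mul, Algebra.smul_def]
  rw [Algebra.commutes c ((algebraMap ℂ A) (M i j)), mul_assoc]

lemma cMat_zero (a : A) : cMat (0 : Matrix m n ℂ) a = 0 := by
  ext i j; simp [cMat]

end

/-- Evaluation `w₁, w₂ ↦ 0`, `w₃ ↦ 1`. -/
def evf (q : ℂ) : P2Alg q →ₐ[ℂ] ℂ :=
  RingQuot.liftAlgHom ℂ ⟨FreeAlgebra.lift ℂ ![0,0,1], by
    intro x y h; cases h <;> simp⟩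

lemma evf_w2 (q : ℂ) : evf q (wP2 q 2) = 1 := by
  simp [evf, wP2, RingQuot.liftAlgHom_mkAlgHom_apply]

lemma cMat_w2sq_eq_zero {q : ℂ} {m n : Type*} (M : Matrix m n ℂ)
    (h : cMat M (wP2 q 2 * wP2 q 2) = 0) : M = 0 := by
  ext i j
  have h1 : (algebraMap ℂ (P2Alg q)) (M i j) * (wP2 q 2 * wP2 q 2) = 0 :=
    congrFun (congrFun h i) j
  have h2 := congrArg (evf q) h1
  simpa [evf_w2, AlgHom.commutes] using h2

/-- `τ·σ = (B₁B₂ − q⁻²B₂B₁ + IJ)·w₃²` in `M_{k×k}(A(ℂP²_θ))`; in particular `τ·σ = 0`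
iff the braided complex ADHM equation holds. -/
theorem tau_mul_sigma_eq_ADHM (q : ℂ) (hq : q ≠ 0) (k r : ℕ) (hk : 1 ≤ k) (hr : 1 ≤ r)
    (B1 B2 : Matrix (Fin k) (Fin k) ℂ) (I : Matrix (Fin k) (Fin r) ℂ)
    (J : Matrix (Fin r) (Fin k) ℂ) :
    τMat q k r B1 B2 I J * σMat q k r B1 B2 I J
        = cMat (B1 * B2 - (q ^ 2)⁻¹ • (B2 * B1) + I * J) (wP2 q 2 * wP2 q 2) ∧
      (τMat q k r B1 B2 I J * σMat q k r B1 B2 I J = 0 ↔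
        B1 * B2 - (q ^ 2)⁻¹ • (B2 * B1) + I * J = 0) := by
  have hmain : τMat q k r B1 B2 I J * σMat q k r B1 B2 I J
      = cMat (B1 * B2 - (q ^ 2)⁻¹ • (B2 * B1) + I * J) (wP2 q 2 * wP2 q 2) := by
    rw [τMat, σMat, Matrix.fromCols_mul_fromRows, Matrix.fromCols_mul_fromRows]
    rw [add_mul, mul_add, mul_add, add_mul, mul_add, mul_add]
    simp only [cMat_mul, w12 q, w02 q, w01 q, cMat_asmul,
      Matrix.smul_mul, Matrix.mul_smul, Matrix.one_mul, Matrix.mul_one, smul_smul]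
    rw [show q * -(q ^ 2)⁻¹ = -q⁻¹ by field_simp,
      show q ^ 2 * (q⁻¹ * q⁻¹) = (1 : ℂ) by field_simp,
      show q * -q⁻¹ = (-1 : ℂ) by field_simp]
    have hz0 : cMat (-q⁻¹ • B2) (wP2 q 2 * wP2 q 0) + cMat (q⁻¹ • B2) (wP2 q 2 * wP2 q 0) = 0 := by
      rw [← cMat_add, show -q⁻¹ • B2 + q⁻¹ • B2 = 0 by module, cMat_zero]
    have hz1 : cMat (-q⁻¹ • B1) (wP2 q 2 * wP2 q 1) + cMat (q⁻¹ • B1) (wP2 q 2 * wP2 q 1) = 0 := by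
      rw [← cMat_add, show -q⁻¹ • B1 + q⁻¹ • B1 = 0 by module, cMat_zero]
    have hzw : cMat ((-1 : ℂ) • (1 : Matrix (Fin k) (Fin k) ℂ)) (wP2 q 1 * wP2 q 0)
        + cMat ((1 : ℂ) • (1 : Matrix (Fin k) (Fin k) ℂ)) (wP2 q 1 * wP2 q 0) = 0 := by
      rw [← cMat_add, show (-1 : ℂ) • (1 : Matrix (Fin k) (Fin k) ℂ) + (1 : ℂ) • 1 = 0 by module,
        cMat_zero]
    have hww : cMat (-(q ^ 2)⁻¹ • (B2 * B1)) (wP2 q 2 * wP2 q 2)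
        + (cMat (B1 * B2) (wP2 q 2 * wP2 q 2) + cMat (I * J) (wP2 q 2 * wP2 q 2))
        = cMat (B1 * B2 - (q ^ 2)⁻¹ • (B2 * B1) + I * J) (wP2 q 2 * wP2 q 2) := by
      rw [show B1 * B2 - (q ^ 2)⁻¹ • (B2 * B1) + I * J
        = -(q ^ 2)⁻¹ • (B2 * B1) + (B1 * B2 + I * J) by module, cMat_add, cMat_add]
    calc cMat (-(q ^ 2)⁻¹ • (B2 * B1)) (wP2 q 2 * wP2 q 2) + cMat (-q⁻¹ • B2) (wP2 q 2 * wP2 q 0) +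
          (cMat (-q⁻¹ • B1) (wP2 q 2 * wP2 q 1)
            + cMat ((-1 : ℂ) • (1 : Matrix (Fin k) (Fin k) ℂ)) (wP2 q 1 * wP2 q 0)) +
        (cMat (B1 * B2) (wP2 q 2 * wP2 q 2) + cMat (q⁻¹ • B1) (wP2 q 2 * wP2 q 1) +
            (cMat (q⁻¹ • B2) (wP2 q 2 * wP2 q 0)
              + cMat ((1 : ℂ) • (1 : Matrix (Fin k) (Fin k) ℂ)) (wP2 q 1 * wP2 q 0)) +
          cMat (I * J) (wP2 q 2 * wP2 q 2))
        = cMat (-(q ^ 2)⁻¹ • (B2 * B1)) (wP2 q 2 * wP2 q 2)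
            + (cMat (B1 * B2) (wP2 q 2 * wP2 q 2) + cMat (I * J) (wP2 q 2 * wP2 q 2))
          + ((cMat (-q⁻¹ • B2) (wP2 q 2 * wP2 q 0) + cMat (q⁻¹ • B2) (wP2 q 2 * wP2 q 0))
            + ((cMat (-q⁻¹ • B1) (wP2 q 2 * wP2 q 1) + cMat (q⁻¹ • B1) (wP2 q 2 * wP2 q 1))
              + (cMat ((-1 : ℂ) • (1 : Matrix (Fin k) (Fin k) ℂ)) (wP2 q 1 * wP2 q 0)
                + cMat ((1 : ℂ) • (1 : Matrix (Fin k) (Fin k) ℂ)) (wP2 q 1 * wP2 q 0)))) := by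
          abel
      _ = cMat (B1 * B2 - (q ^ 2)⁻¹ • (B2 * B1) + I * J) (wP2 q 2 * wP2 q 2) := by
          rw [hz0, hz1, hzw, add_zero, add_zero, add_zero, hww]
  refine ⟨hmain, ?_⟩
  rw [hmain]
  constructor
  · exact cMat_w2sq_eq_zero _
  · intro h; rw [h, cMat_zero]
end
end

section
/- Let (B₁, B₂, I, J) be a stable noncommutative ADHM datum. (a) If ψ ∈ M_{k×k}(ℂ) satisfies ψB₁ − q⁻²B₁ψ = 0, B₂ψ − q⁻²ψB₂ = 0, ψI = 0 and Jψ = 0, then ψ = 0. (b) Consequently the ℂ-linear map dμ_c : M_{k×k}(ℂ) ⊕ M_{k×k}(ℂ) ⊕ M_{k×r}(ℂ) ⊕ M_{r×k}(ℂ) → M_{k×k}(ℂ) defined by dμ_c(b₁, b₂, i, j) = b₁B₂ + B₁b₂ − q⁻²(b₂B₁ + B₂b₁) + iJ + Ij is surjective. -/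
noncomputable section

/-- Stability of a noncommutative ADHM datum `(B₁, B₂, I, J)`: the only subspace
`V' ⊆ ℂᵏ` with `B₁ V' ⊆ V'`, `B₂ V' ⊆ V'` and `range I ⊆ V'` is `V' = ℂᵏ`. -/
def ADHMStable (k r : ℕ) (B1 B2 : Matrix (Fin k) (Fin k) ℂ)
    (I : Matrix (Fin k) (Fin r) ℂ) : Prop :=
  ∀ V' : Submodule ℂ (Fin k → ℂ),
    (∀ v ∈ V', B1.mulVec v ∈ V') → (∀ v ∈ V', B2.mulVec v ∈ V') →
    (∀ u : Fin r → ℂ, I.mulVec u ∈ V') → V' = ⊤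

/-- If `trace (X * A) = 0` for all `X`, then `A = 0`. -/
lemma trace_mul_eq_zero_forall {m n : ℕ} (A : Matrix (Fin n) (Fin m) ℂ)
    (h : ∀ X : Matrix (Fin m) (Fin n) ℂ, Matrix.trace (X * A) = 0) : A = 0 := by
  ext i j
  have := h (Matrix.single j i 1)
  simpa [Matrix.trace, Matrix.diag, Matrix.mul_apply, Matrix.single, ite_and,
    Finset.sum_ite_eq, Finset.sum_ite_eq'] using this

/-- Every linear functional on square matrices is `X ↦ trace (X * C)` for a suitable `C`. -/
lemma dual_eq_trace {k : ℕ} (φ : Module.Dual ℂ (Matrix (Fin k) (Fin k) ℂ))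
    (X : Matrix (Fin k) (Fin k) ℂ) :
    φ X = Matrix.trace (X * Matrix.of (fun j i => φ (Matrix.single i j 1))) := by
  conv_lhs => rw [Matrix.matrix_eq_sum_single X]
  rw [map_sum]
  simp only [map_sum]
  rw [Matrix.trace]
  simp only [Matrix.diag, Matrix.mul_apply, Matrix.of_apply]
  refine Finset.sum_congr rfl fun i _ => ?_
  have hsb : ∀ j, Matrix.single i j (X i j)
      = (X i j) • Matrix.single i j (1 : ℂ) := by
    intro j; ext a b
    simp only [Matrix.single, Matrix.smul_apply, Matrix.of_apply, smul_eq_mul]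
    by_cases h1 : i = a <;> by_cases h2 : j = b <;> simp [h1, h2]
  refine Finset.sum_congr rfl fun j _ => ?_
  rw [hsb j, map_smul]
  simp [mul_comm]

/-- A cyclic trace identity. -/
lemma trace_cyc {a b c : ℕ} (X : Matrix (Fin a) (Fin b) ℂ) (C : Matrix (Fin b) (Fin c) ℂ)
    (B : Matrix (Fin c) (Fin a) ℂ) :
    Matrix.trace (X * (C * B)) = Matrix.trace ((B * X) * C) := by
  rw [← Matrix.mul_assoc, Matrix.trace_mul_comm, ← Matrix.mul_assoc]

/-- (a) For a stable braided ADHM datum, the adjoint of the linearized ADHM equation is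
injective; (b) consequently the linearization `dμ_c` of the braided ADHM equation is
surjective (vanishing `H²` of the instanton deformation complex). -/
theorem dmu_adjoint_injective_and_dmu_surjective (q : ℂ) (hq : q ≠ 0) (k r : ℕ)
    (hk : 1 ≤ k) (hr : 1 ≤ r)
    (B1 B2 : Matrix (Fin k) (Fin k) ℂ) (I : Matrix (Fin k) (Fin r) ℂ)
    (J : Matrix (Fin r) (Fin k) ℂ)
    (hstab : ADHMStable k r B1 B2 I) :
    (∀ ψ : Matrix (Fin k) (Fin k) ℂ,
        ψ * B1 - (q ^ 2)⁻¹ • (B1 * ψ) = 0 →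
        B2 * ψ - (q ^ 2)⁻¹ • (ψ * B2) = 0 →
        ψ * I = 0 → J * ψ = 0 → ψ = 0) ∧
      Function.Surjective
        (fun p : Matrix (Fin k) (Fin k) ℂ × Matrix (Fin k) (Fin k) ℂ ×
            Matrix (Fin k) (Fin r) ℂ × Matrix (Fin r) (Fin k) ℂ =>
          p.1 * B2 + B1 * p.2.1 - (q ^ 2)⁻¹ • (p.2.1 * B1 + B2 * p.1)
            + p.2.2.1 * J + I * p.2.2.2) := by
  have hq2 : (q ^ 2) ≠ 0 := pow_ne_zero _ hq
  -- Part (a)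
  have partA : ∀ ψ : Matrix (Fin k) (Fin k) ℂ,
      ψ * B1 - (q ^ 2)⁻¹ • (B1 * ψ) = 0 →
      B2 * ψ - (q ^ 2)⁻¹ • (ψ * B2) = 0 →
      ψ * I = 0 → J * ψ = 0 → ψ = 0 := by
    intro ψ h1 h2 h3 _h4
    rw [sub_eq_zero] at h1 h2
    have e2 : ψ * B2 = (q ^ 2) • (B2 * ψ) := by
      rw [h2, smul_smul, mul_inv_cancel₀ hq2, one_smul]
    have hker : LinearMap.ker ψ.mulVecLin = ⊤ := by
      apply hstab
      · intro v hv
        simp only [LinearMap.mem_ker, Matrix.mulVecLin_apply] at hv ⊢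
        rw [Matrix.mulVec_mulVec, h1, Matrix.smul_mulVec, ← Matrix.mulVec_mulVec, hv,
          Matrix.mulVec_zero, smul_zero]
      · intro v hv
        simp only [LinearMap.mem_ker, Matrix.mulVecLin_apply] at hv ⊢
        rw [Matrix.mulVec_mulVec, e2, Matrix.smul_mulVec, ← Matrix.mulVec_mulVec, hv,
          Matrix.mulVec_zero, smul_zero]
      · intro u
        simp only [LinearMap.mem_ker, Matrix.mulVecLin_apply]
        rw [Matrix.mulVec_mulVec, h3, Matrix.zero_mulVec]
    ext i j
    have hv : Pi.single j (1 : ℂ) ∈ LinearMap.ker ψ.mulVecLin := by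
      rw [hker]; trivial
    have hz : ψ.mulVec (Pi.single j 1) = 0 := LinearMap.mem_ker.mp hv
    have := congrFun hz i
    simpa [Matrix.mulVec_single] using this
  refine ⟨partA, ?_⟩
  -- Part (b)
  set L : (Matrix (Fin k) (Fin k) ℂ × Matrix (Fin k) (Fin k) ℂ ×
      Matrix (Fin k) (Fin r) ℂ × Matrix (Fin r) (Fin k) ℂ) →ₗ[ℂ]
      Matrix (Fin k) (Fin k) ℂ :=
    { toFun := fun p =>
        p.1 * B2 + B1 * p.2.1 - (q ^ 2)⁻¹ • (p.2.1 * B1 + B2 * p.1)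
          + p.2.2.1 * J + I * p.2.2.2
      map_add' := by
        intro p p'
        simp only [Prod.fst_add, Prod.snd_add, Matrix.add_mul, Matrix.mul_add, smul_add]
        module
      map_smul' := by
        intro c p
        simp only [Prod.smul_fst, Prod.smul_snd, Matrix.smul_mul, Matrix.mul_smul,
          RingHom.id_apply, smul_add, smul_comm ((q ^ 2)⁻¹) c]
        module } with hL
  suffices hsurj : Function.Surjective L by
    intro y
    obtain ⟨p, hp⟩ := hsurj y
    exact ⟨p, hp⟩
  rw [← LinearMap.range_eq_top]
  by_contra hne
  obtain ⟨φ, hφ0, hφ⟩ := (LinearMap.range L).exists_le_ker_of_lt_top (lt_top_iff_ne_top.mpr hne)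
  set C : Matrix (Fin k) (Fin k) ℂ :=
    Matrix.of (fun j i => φ (Matrix.single i j 1)) with hC
  have hφtr : ∀ X, φ X = Matrix.trace (X * C) := fun X => dual_eq_trace φ X
  have hzero : ∀ p, Matrix.trace (L p * C) = 0 := by
    intro p
    rw [← hφtr]
    exact hφ ⟨p, rfl⟩
  -- derive the four adjoint equations for C
  have hc1 : C * B1 - (q ^ 2)⁻¹ • (B1 * C) = 0 := by
    apply trace_mul_eq_zero_forall
    intro X
    have h := hzero (0, X, 0, 0)
    simp only [hL, LinearMap.coe_mk, AddHom.coe_mk, Matrix.zero_mul, Matrix.mul_zero,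
      add_zero, zero_add] at h
    rw [Matrix.sub_mul, Matrix.trace_sub, Matrix.smul_mul, Matrix.trace_smul] at h
    rw [Matrix.mul_sub, Matrix.trace_sub, Matrix.mul_smul, Matrix.trace_smul,
      trace_cyc X C B1, ← Matrix.mul_assoc]
    exact h
  have hc2 : B2 * C - (q ^ 2)⁻¹ • (C * B2) = 0 := by
    apply trace_mul_eq_zero_forall
    intro X
    have h := hzero (X, 0, 0, 0)
    simp only [hL, LinearMap.coe_mk, AddHom.coe_mk, Matrix.zero_mul, Matrix.mul_zero,
      add_zero, zero_add] at h
    rw [Matrix.sub_mul, Matrix.trace_sub, Matrix.smul_mul, Matrix.trace_smul] at h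
    rw [Matrix.mul_sub, Matrix.trace_sub, Matrix.mul_smul, Matrix.trace_smul,
      trace_cyc X C B2, ← Matrix.mul_assoc]
    exact h
  have hc3 : C * I = 0 := by
    apply trace_mul_eq_zero_forall
    intro X
    have h := hzero (0, 0, 0, X)
    simp only [hL, LinearMap.coe_mk, AddHom.coe_mk, Matrix.zero_mul, Matrix.mul_zero,
      add_zero, zero_add, smul_zero, sub_zero] at h
    rw [Matrix.trace_mul_cycle, Matrix.trace_mul_comm] at h
    exact h
  have hc4 : J * C = 0 := by
    apply trace_mul_eq_zero_forall
    intro X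
    have h := hzero (0, 0, X, 0)
    simp only [hL, LinearMap.coe_mk, AddHom.coe_mk, Matrix.zero_mul, Matrix.mul_zero,
      add_zero, zero_add, smul_zero, sub_zero] at h
    rwa [Matrix.mul_assoc] at h
  have hCzero : C = 0 := partA C hc1 hc2 hc3 hc4
  apply hφ0
  ext X
  simp [hφtr, hCzero]
end
end

section
/- Let (B₁, B₂, I, J) be a stable noncommutative ADHM datum. Then the ℂ-linear map dφ : M_{k×k}(ℂ) → M_{k×k}(ℂ) ⊕ M_{k×k}(ℂ) ⊕ M_{k×r}(ℂ) ⊕ M_{r×k}(ℂ) defined by dφ(ξ) = (ξB₁ − B₁ξ, ξB₂ − B₂ξ, ξI, −Jξ) is injective. -/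
noncomputable section

/-- For a stable noncommutative ADHM datum, the linearization
`dφ(ξ) = (ξB₁ − B₁ξ, ξB₂ − B₂ξ, ξI, −Jξ)` of the `GL_k(ℂ)`-action is injective
(vanishing `H⁰` of the instanton deformation complex). -/
theorem dphi_injective (q : ℂ) (hq : q ≠ 0) (k r : ℕ) (hk : 1 ≤ k) (hr : 1 ≤ r)
    (B1 B2 : Matrix (Fin k) (Fin k) ℂ) (I : Matrix (Fin k) (Fin r) ℂ)
    (J : Matrix (Fin r) (Fin k) ℂ)
    (hstab : ADHMStable k r B1 B2 I) :
    Function.Injective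
      (fun ξ : Matrix (Fin k) (Fin k) ℂ =>
        ((ξ * B1 - B1 * ξ, ξ * B2 - B2 * ξ, ξ * I, -(J * ξ)) :
          Matrix (Fin k) (Fin k) ℂ × Matrix (Fin k) (Fin k) ℂ ×
            Matrix (Fin k) (Fin r) ℂ × Matrix (Fin r) (Fin k) ℂ)) := by
  intro x y h
  simp only [Prod.mk.injEq] at h
  obtain ⟨h1, h2, h3, _⟩ := h
  set ξ := x - y with hξ
  have e1 : ξ * B1 = B1 * ξ := by
    have := sub_eq_sub_iff_sub_eq_sub.mp h1
    simp only [hξ, sub_mul, mul_sub, this]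
  have e2 : ξ * B2 = B2 * ξ := by
    have := sub_eq_sub_iff_sub_eq_sub.mp h2
    simp only [hξ, sub_mul, mul_sub, this]
  have e3 : ξ * I = 0 := by
    rw [hξ, Matrix.sub_mul, h3, sub_self]
  have hker : LinearMap.ker ξ.mulVecLin = ⊤ := by
    apply hstab
    · intro v hv
      simp only [LinearMap.mem_ker, Matrix.mulVecLin_apply] at hv ⊢
      rw [Matrix.mulVec_mulVec, e1, ← Matrix.mulVec_mulVec, hv, Matrix.mulVec_zero]
    · intro v hv
      simp only [LinearMap.mem_ker, Matrix.mulVecLin_apply] at hv ⊢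
      rw [Matrix.mulVec_mulVec, e2, ← Matrix.mulVec_mulVec, hv, Matrix.mulVec_zero]
    · intro u
      simp only [LinearMap.mem_ker, Matrix.mulVecLin_apply,
        Matrix.mulVec_mulVec, e3, Matrix.zero_mulVec]
  have hzero : ξ = 0 := by
    have : ξ.mulVecLin = 0 := LinearMap.ker_eq_top.mp hker
    ext i j
    have := congrFun (congrArg (fun f => f (Pi.single j 1))
      (congrArg DFunLike.coe this)) i
    simpa [Matrix.mulVec_single] using this
  have := sub_eq_zero.mp hzero
  exact this
end
end

section
/- Fix q ∈ ℂ with q ≠ 0 and integers k ≥ 1, r ≥ 1. For all B₁, B₂, v₁, v₂, ξ ∈ M_{k×k}(ℂ), all I, v_I ∈ M_{k×r}(ℂ) and all J, v_J ∈ M_{r×k}(ℂ), the following trace identity holds: Tr((v₁B₂ + B₁v₂ − q⁻²(v₂B₁ + B₂v₁) + v_I J + I v_J)·ξ) = Tr((ξB₁ − q⁻²B₁ξ)·v₂) − q⁻²·Tr((ξB₂ − q²B₂ξ)·v₁) + Tr((ξI)·v_J) + Tr(v_I·(Jξ)). -/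
noncomputable section

open Matrix

/-- The compatibility `⟨dμ_c(v), ξ⟩ = ω(ξ̂, v)` of the braided complex moment map with
the braided symplectic form, written as a trace identity. -/
theorem braided_moment_map_compatibility (q : ℂ) (hq : q ≠ 0) (k r : ℕ)
    (hk : 1 ≤ k) (hr : 1 ≤ r)
    (B1 B2 v1 v2 ξ : Matrix (Fin k) (Fin k) ℂ)
    (I vI : Matrix (Fin k) (Fin r) ℂ) (J vJ : Matrix (Fin r) (Fin k) ℂ) :
    Matrix.trace
        ((v1 * B2 + B1 * v2 - (q ^ 2)⁻¹ • (v2 * B1 + B2 * v1) + vI * J + I * vJ) * ξ)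
      = Matrix.trace ((ξ * B1 - (q ^ 2)⁻¹ • (B1 * ξ)) * v2)
        - (q ^ 2)⁻¹ * Matrix.trace ((ξ * B2 - q ^ 2 • (B2 * ξ)) * v1)
        + Matrix.trace ((ξ * I) * vJ) + Matrix.trace (vI * (J * ξ)) := by
  have hq2 : (q : ℂ) ^ 2 ≠ 0 := pow_ne_zero _ hq
  simp only [add_mul, sub_mul, smul_mul_assoc, mul_smul_comm, trace_add, trace_sub,
    trace_smul, smul_eq_mul, mul_assoc]
  rw [trace_mul_comm v1 (B2 * ξ), trace_mul_comm B1 (v2 * ξ),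
    trace_mul_comm v2 (B1 * ξ), trace_mul_comm B2 (v1 * ξ),
    trace_mul_comm (I * vJ) ξ]
  simp only [mul_assoc]
  rw [trace_mul_comm v2 (ξ * B1), trace_mul_comm v1 (ξ * B2)]
  simp only [mul_assoc]
  field_simp
  rw [Matrix.mul_assoc vI J ξ, Matrix.mul_assoc ξ I vJ]
  ring
end
end

section
/- Let q ∈ ℂ with q ≠ 0, let r ≥ 1, and let V be a finite-dimensional ℂ-vector space equipped with a direct sum decomposition V = ⊕_{l=1}^r ⊕_{p ∈ ℤ²} V_l(p) with all but finitely many summands zero. Let B₁, B₂ ∈ End_ℂ(V) satisfy B₁(V_l(p)) ⊆ V_l(p − (1,0)) and B₂(V_l(p)) ⊆ V_l(p − (0,1)) for all l and p. Let I₁, …, I_r ∈ V with I_l ∈ V_l(−1,−1), and let J₁, …, J_r : V → ℂ be linear functionals such that J_l vanishes on V_{l'}(p) whenever (l', p) ≠ (l, (0,0)). Assume the braided ADHM equation B₁B₂ − q⁻²B₂B₁ + Σ_{l=1}^r I_l ⊗ J_l = 0 (where I_l ⊗ J_l denotes the endomorphism v ↦ J_l(v)·I_l), and assume stability: the only ℂ-subspace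 of V invariant under B₁ and B₂ and containing I₁, …, I_r is V itself. Then: (a) J_l = 0 for every l; (b) V_l(p) = 0 unless p₁ ≤ −1 and p₂ ≤ −1; (c) for all integers a, b ≥ 0, the space V_l(−1−a, −1−b) is spanned by B₁^a B₂^b I_l, so has dimension at most one; (d) each set λ^l = {(a+1, b+1) : a, b ∈ ℕ, B₁^a B₂^b I_l ≠ 0} is a Young diagram, i.e. if (p₁,p₂) ∈ λ^l and 1 ≤ p₁' ≤ p₁, 1 ≤ p₂' ≤ p₂ then (p₁',p₂') ∈ λ^l; and Σ_{l=1}^r |λ^l| = dim_ℂ V. -/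
noncomputable section

private lemma swap_pow_aux {V : Type} [AddCommGroup V] [Module ℂ V]
    {A B : Module.End ℂ V} {c : ℂ} (h : A * B = c • (B * A)) (n m : ℕ) :
    A ^ n * B ^ m = c ^ (n * m) • (B ^ m * A ^ n) := by
  have key : ∀ m, A * B ^ m = c ^ m • (B ^ m * A) := by
    intro m
    induction m with
    | zero => simp
    | succ m ih =>
      calc A * B ^ (m + 1) = (A * B ^ m) * B := by rw [pow_succ, mul_assoc]
        _ = c ^ m • (B ^ m * (A * B)) := by rw [ih, smul_mul_assoc, mul_assoc]
        _ = c ^ m • (B ^ m * (c • (B * A))) := by rw [h]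
        _ = c ^ (m + 1) • (B ^ (m + 1) * A) := by
            rw [mul_smul_comm, smul_smul, pow_succ, mul_comm (c ^ m) c, pow_succ,
              mul_assoc]
  induction n with
  | zero => simp
  | succ n ih =>
    calc A ^ (n + 1) * B ^ m = A ^ n * (A * B ^ m) := by
          rw [pow_succ, mul_assoc]
      _ = c ^ m • (A ^ n * B ^ m * A) := by rw [key m, mul_smul_comm, mul_assoc]
      _ = c ^ m • ((c ^ (n * m) • (B ^ m * A ^ n)) * A) := by rw [ih]
      _ = c ^ ((n + 1) * m) • (B ^ m * A ^ (n + 1)) := by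
          rw [smul_mul_assoc, smul_smul, mul_assoc, ← pow_succ, ← pow_add]
          ring_nf

private lemma component_le_aux {ι : Type} [DecidableEq ι] {V : Type} [AddCommGroup V]
    [Module ℂ V] {M : ι → Submodule ℂ V} (hint : DirectSum.IsInternal M)
    (S : ι → Submodule ℂ V) (hle : ∀ i, S i ≤ M i) (htop : ⨆ i, S i = ⊤) (i : ι) :
    M i ≤ S i := by
  intro v hv
  set e := LinearEquiv.ofBijective (DirectSum.coeLinearMap M) hint with he
  let π : V →ₗ[ℂ] V := (M i).subtype ∘ₗ
    ((DirectSum.component ℂ ι (fun j => ↥(M j)) i) ∘ₗ e.symm.toLinearMap)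
  have hπ_self : ∀ x, ∀ hx : x ∈ M i, π x = x := by
    intro x hx
    show (((e.symm x) i : ↥(M i)) : V) = x
    rw [he, hint.ofBijective_coeLinearMap_of_mem hx]
  have hπ_ne : ∀ j, j ≠ i → ∀ x, x ∈ M j → π x = 0 := by
    intro j hj x hx
    show (((e.symm x) i : ↥(M i)) : V) = 0
    rw [he, hint.ofBijective_coeLinearMap_of_mem_ne hj hx, ZeroMemClass.coe_zero]
  have hv' : v ∈ ⨆ j, S j := htop ▸ Submodule.mem_top
  have : π v ∈ S i := by
    refine Submodule.iSup_induction (motive := fun x => π x ∈ S i) S hv' ?_ (by simp) ?_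
    · intro j x hx
      by_cases hji : j = i
      · subst hji
        rw [hπ_self x (hle j hx)]
        exact hx
      · rw [hπ_ne j hji x (hle j hx)]
        exact zero_mem _
    · intro x y hx hy
      rw [map_add]
      exact add_mem hx hy
  rwa [hπ_self v hv] at this

/-- Classification of torus-fixed points of the instanton moduli space: given a weight
decomposition `V = ⊕_{l,p} V_l(p)` compatible with a stable braided ADHM datum, one has
`J = 0`, the weights are supported in the negative quadrant, each weight space is spanned
by `B₁^a B₂^b I_l`, the resulting sets are Young diagrams, and their total size is
`dim ℂ V`. -/
theorem torus_fixed_points_are_Young_diagrams (q : ℂ) (hq : q ≠ 0) (r : ℕ) (hr : 1 ≤ r)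
    (V : Type) [AddCommGroup V] [Module ℂ V] [FiniteDimensional ℂ V]
    (W : Fin r → ℤ × ℤ → Submodule ℂ V)
    (hinternal : DirectSum.IsInternal (fun lp : Fin r × (ℤ × ℤ) => W lp.1 lp.2))
    (hfin : {lp : Fin r × (ℤ × ℤ) | W lp.1 lp.2 ≠ ⊥}.Finite)
    (B1 B2 : Module.End ℂ V)
    (hB1 : ∀ (l : Fin r) (p : ℤ × ℤ), ∀ v ∈ W l p, B1 v ∈ W l (p.1 - 1, p.2))
    (hB2 : ∀ (l : Fin r) (p : ℤ × ℤ), ∀ v ∈ W l p, B2 v ∈ W l (p.1, p.2 - 1))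
    (I : Fin r → V) (hI : ∀ l, I l ∈ W l (-1, -1))
    (J : Fin r → (V →ₗ[ℂ] ℂ))
    (hJ : ∀ (l l' : Fin r) (p : ℤ × ℤ), (l', p) ≠ (l, (0, 0)) → ∀ v ∈ W l' p, J l v = 0)
    (hADHM : ∀ v : V, B1 (B2 v) - (q ^ 2)⁻¹ • B2 (B1 v) + ∑ l, J l v • I l = 0)
    (hstab : ∀ V' : Submodule ℂ V, (∀ v ∈ V', B1 v ∈ V') → (∀ v ∈ V', B2 v ∈ V') →
      (∀ l, I l ∈ V') → V' = ⊤) :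
    (∀ l, J l = 0) ∧
      (∀ (l : Fin r) (p : ℤ × ℤ), ¬(p.1 ≤ -1 ∧ p.2 ≤ -1) → W l p = ⊥) ∧
      (∀ (l : Fin r) (a b : ℕ),
        W l (-1 - (a : ℤ), -1 - (b : ℤ))
          = Submodule.span ℂ {(B1 ^ a) ((B2 ^ b) (I l))}) ∧
      (∀ (l : Fin r) (a b a' b' : ℕ), a' ≤ a → b' ≤ b →
        (B1 ^ a) ((B2 ^ b) (I l)) ≠ 0 → (B1 ^ a') ((B2 ^ b') (I l)) ≠ 0) ∧
      ∑ l, Set.ncard {ab : ℕ × ℕ | (B1 ^ ab.1) ((B2 ^ ab.2) (I l)) ≠ 0}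
        = Module.finrank ℂ V := by
  classical
  set E : Fin r → ℕ → ℕ → V := fun l a b => (B1 ^ a) ((B2 ^ b) (I l)) with hE
  -- membership of the E's in weight spaces
  have hmem2 : ∀ (l : Fin r) (b : ℕ), (B2 ^ b) (I l) ∈ W l (-1, -1 - (b : ℤ)) := by
    intro l b
    induction b with
    | zero => simpa using hI l
    | succ b ih =>
      have : (B2 ^ (b + 1)) (I l) = B2 ((B2 ^ b) (I l)) := by
        rw [pow_succ']; rfl
      rw [this]
      have := hB2 l (-1, -1 - (b : ℤ)) _ ih
      convert this using 2
      push_cast; ring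
  have hmem : ∀ (l : Fin r) (a b : ℕ), E l a b ∈ W l (-1 - (a : ℤ), -1 - (b : ℤ)) := by
    intro l a b
    induction a with
    | zero => simpa [hE] using hmem2 l b
    | succ a ih =>
      have h1 : E l (a + 1) b = B1 (E l a b) := by
        simp only [hE]
        rw [pow_succ']; rfl
      rw [h1]
      have := hB1 l (-1 - (a : ℤ), -1 - (b : ℤ)) _ ih
      convert this using 2
      push_cast; ring
  -- Part (b): quadrant support
  have hquad : ∀ (l : Fin r) (p : ℤ × ℤ), ¬(p.1 ≤ -1 ∧ p.2 ≤ -1) → W l p = ⊥ := by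
    intro l p hp
    set U : Submodule ℂ V :=
      ⨆ (l : Fin r), ⨆ (p : ℤ × ℤ), ⨆ (_ : p.1 ≤ -1 ∧ p.2 ≤ -1), W l p with hUdef
    have hUle : ∀ (l' : Fin r) (p' : ℤ × ℤ), p'.1 ≤ -1 → p'.2 ≤ -1 → W l' p' ≤ U := by
      intro l' p' h1 h2
      refine le_trans ?_ (le_iSup _ l')
      refine le_trans ?_ (le_iSup _ p')
      exact le_iSup (fun _ : p'.1 ≤ -1 ∧ p'.2 ≤ -1 => W l' p') ⟨h1, h2⟩
    have hU1 : ∀ v ∈ U, B1 v ∈ U := by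
      intro v hv
      have : Submodule.map B1 U ≤ U := by
        rw [hUdef]
        simp only [Submodule.map_iSup]
        refine iSup_le fun l' => iSup_le fun p' => iSup_le fun hp' => ?_
        refine le_trans (Submodule.map_le_iff_le_comap.mpr fun x hx =>
          hB1 l' p' x hx) ?_
        exact hUle l' (p'.1 - 1, p'.2) (by omega) hp'.2
      exact this (Submodule.mem_map_of_mem hv)
    have hU2 : ∀ v ∈ U, B2 v ∈ U := by
      intro v hv
      have : Submodule.map B2 U ≤ U := by
        rw [hUdef]
        simp only [Submodule.map_iSup]
        refine iSup_le fun l' => iSup_le fun p' => iSup_le fun hp' => ?_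
        refine le_trans (Submodule.map_le_iff_le_comap.mpr fun x hx =>
          hB2 l' p' x hx) ?_
        exact hUle l' (p'.1, p'.2 - 1) hp'.1 (by omega)
      exact this (Submodule.mem_map_of_mem hv)
    have hUI : ∀ l', I l' ∈ U := fun l' =>
      hUle l' (-1, -1) le_rfl le_rfl (hI l')
    have hUtop : U = ⊤ := hstab U hU1 hU2 hUI
    have hind := hinternal.submodule_iSupIndep
    have hdisj := hind (⟨l, p⟩ : Fin r × (ℤ × ℤ))
    have hUle' : U ≤ ⨆ (j : Fin r × (ℤ × ℤ)) (_ : j ≠ (l, p)), W j.1 j.2 := by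
      rw [hUdef]
      refine iSup_le fun l' => iSup_le fun p' => iSup_le fun hp' => ?_
      have hne : ((l', p') : Fin r × (ℤ × ℤ)) ≠ (l, p) := by
        intro h
        apply hp
        have : p' = p := (Prod.ext_iff.mp h).2
        rw [← this]; exact hp'
      exact le_trans (le_refl (W l' p'))
        (le_iSup_of_le (⟨l', p'⟩ : Fin r × (ℤ × ℤ)) (le_iSup_of_le hne le_rfl))
    have h1 : W l p ≤ U := hUtop ▸ le_top
    exact (hdisj.mono_right hUle').eq_bot_of_le h1
  -- Part (a): J = 0
  have hJ0 : ∀ l, J l = 0 := by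
    intro l
    ext v
    have hv : v ∈ ⨆ (j : Fin r × (ℤ × ℤ)), W j.1 j.2 :=
      hinternal.submodule_iSup_eq_top ▸ Submodule.mem_top
    simp only [LinearMap.zero_apply]
    refine Submodule.iSup_induction (motive := fun x => J l x = 0) _ hv ?_ (map_zero _) ?_
    · intro j x hx
      by_cases hji : (j.1, j.2) = (l, ((0 : ℤ), (0 : ℤ)))
      · have hz : W j.1 j.2 = ⊥ := by
          refine hquad j.1 j.2 ?_
          have : j.2 = ((0 : ℤ), (0 : ℤ)) := (Prod.ext_iff.mp hji).2
          rw [this]; push_neg; intro h; omega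
        rw [hz] at hx
        simp only [Submodule.mem_bot] at hx
        rw [hx, map_zero]
      · exact hJ l j.1 j.2 hji x hx
    · intro x y hx hy
      rw [map_add, hx, hy, add_zero]
  -- commutation relations
  have hq2 : (q : ℂ) ^ 2 ≠ 0 := pow_ne_zero _ hq
  have hcomm : B1 * B2 = (q ^ 2)⁻¹ • (B2 * B1) := by
    ext v
    have := hADHM v
    simp only [hJ0, LinearMap.zero_apply, zero_smul, Finset.sum_const_zero, add_zero,
      sub_eq_zero] at this
    simpa using this
  have hcomm' : B2 * B1 = (q ^ 2) • (B1 * B2) := by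
    rw [hcomm, smul_smul, mul_inv_cancel₀ hq2, one_smul]
  have hswap : ∀ n m : ℕ, B1 ^ n * B2 ^ m = ((q ^ 2)⁻¹) ^ (n * m) • (B2 ^ m * B1 ^ n) :=
    swap_pow_aux hcomm
  have hswap' : ∀ n m : ℕ, B2 ^ n * B1 ^ m = (q ^ 2) ^ (n * m) • (B1 ^ m * B2 ^ n) :=
    swap_pow_aux hcomm'
  -- the span of the E's is everything
  set U2 : Submodule ℂ V :=
    Submodule.span ℂ (Set.range fun x : Fin r × ℕ × ℕ => E x.1 x.2.1 x.2.2) with hU2def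
  have hEmem : ∀ (l : Fin r) (a b : ℕ), E l a b ∈ U2 := fun l a b =>
    Submodule.subset_span ⟨(l, a, b), rfl⟩
  have hU2B1 : ∀ v ∈ U2, B1 v ∈ U2 := by
    intro v hv
    refine Submodule.span_induction ?_ (by simp) ?_ ?_ hv
    · rintro x ⟨⟨l, a, b⟩, rfl⟩
      have : B1 (E l a b) = E l (a + 1) b := by
        simp only [hE]; rw [pow_succ']; rfl
      rw [this]; exact hEmem l (a + 1) b
    · intro x y hx hy hx' hy'
      rw [map_add]; exact add_mem hx' hy'
    · intro c x hx hx'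
      rw [map_smul]; exact Submodule.smul_mem _ _ hx'
  have hU2B2 : ∀ v ∈ U2, B2 v ∈ U2 := by
    intro v hv
    refine Submodule.span_induction ?_ (by simp) ?_ ?_ hv
    · rintro x ⟨⟨l, a, b⟩, rfl⟩
      have h1 : B2 (E l a b) = (B2 * B1 ^ a) ((B2 ^ b) (I l)) := rfl
      have h2 : B2 (E l a b) = (q ^ 2) ^ a • E l a (b + 1) := by
        rw [h1]
        have := hswap' 1 a
        rw [pow_one] at this
        rw [this]
        simp only [LinearMap.smul_apply, one_mul]
        congr 1
        simp only [hE]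
        have : (B1 ^ a * B2) ((B2 ^ b) (I l)) = (B1 ^ a) (B2 ((B2 ^ b) (I l))) := rfl
        rw [this]
        congr 1
        rw [pow_succ']; rfl
      rw [h2]
      exact Submodule.smul_mem _ _ (hEmem l a (b + 1))
    · intro x y hx hy hx' hy'
      rw [map_add]; exact add_mem hx' hy'
    · intro c x hx hx'
      rw [map_smul]; exact Submodule.smul_mem _ _ hx'
  have hU2I : ∀ l, I l ∈ U2 := by
    intro l
    have : I l = E l 0 0 := by simp [hE]
    rw [this]; exact hEmem l 0 0
  have hU2top : U2 = ⊤ := hstab U2 hU2B1 hU2B2 hU2I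
  -- Part (c): each weight space is a span
  have hspan : ∀ (l : Fin r) (a b : ℕ),
      W l (-1 - (a : ℤ), -1 - (b : ℤ)) = Submodule.span ℂ {E l a b} := by
    intro l a b
    -- define componentwise submodules
    set S : Fin r × (ℤ × ℤ) → Submodule ℂ V := fun j =>
      ⨆ (a' : ℕ) (b' : ℕ) (_ : j = (j.1, (-1 - (a' : ℤ), -1 - (b' : ℤ)))),
        Submodule.span ℂ {E j.1 a' b'} with hSdef
    have hSle : ∀ j, S j ≤ W j.1 j.2 := by
      intro j
      refine iSup_le fun a' => iSup_le fun b' => iSup_le fun hj => ?_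
      rw [Submodule.span_le, Set.singleton_subset_iff]
      have := hmem j.1 a' b'
      have h2 : j.2 = (-1 - (a' : ℤ), -1 - (b' : ℤ)) := (Prod.ext_iff.mp hj).2
      rw [h2]
      exact this
    have hStop : ⨆ j, S j = ⊤ := by
      rw [← top_le_iff, ← hU2top, hU2def, Submodule.span_le]
      rintro x ⟨⟨l', a', b'⟩, rfl⟩
      have : E l' a' b' ∈ S (l', (-1 - (a' : ℤ), -1 - (b' : ℤ))) := by
        refine Submodule.mem_iSup_of_mem a' (Submodule.mem_iSup_of_mem b'
          (Submodule.mem_iSup_of_mem rfl ?_))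
        exact Submodule.mem_span_singleton_self _
      exact Submodule.mem_iSup_of_mem _ this
    have hkey := component_le_aux hinternal S hSle hStop (l, (-1 - (a : ℤ), -1 - (b : ℤ)))
    refine le_antisymm ?_ ?_
    · refine le_trans hkey ?_
      refine iSup_le fun a' => iSup_le fun b' => iSup_le fun hj => ?_
      have h2 : ((-1 - (a : ℤ), -1 - (b : ℤ)) : ℤ × ℤ)
          = (-1 - (a' : ℤ), -1 - (b' : ℤ)) := (Prod.ext_iff.mp hj).2
      have ha : a' = a := by
        have := (Prod.ext_iff.mp h2).1; omega
      have hb : b' = b := by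
        have := (Prod.ext_iff.mp h2).2; omega
      subst ha; subst hb
      exact le_rfl
    · rw [Submodule.span_le, Set.singleton_subset_iff]
      exact hmem l a b
  -- Part (d): Young diagram property
  have hyoung : ∀ (l : Fin r) (a b a' b' : ℕ), a' ≤ a → b' ≤ b →
      E l a b ≠ 0 → E l a' b' ≠ 0 := by
    intro l a b a' b' ha hb hne
    contrapose! hne
    -- first increase a
    have step1 : E l a b' = 0 := by
      have : E l a b' = (B1 ^ (a - a')) (E l a' b') := by
        simp only [hE]
        have : B1 ^ a = B1 ^ (a - a') * B1 ^ a' := by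
          rw [← pow_add]; congr 1; omega
        rw [this]; rfl
      rw [this, hne, map_zero]
    -- then increase b
    have : E l a b = ((q ^ 2)⁻¹) ^ (a * (b - b')) • (B2 ^ (b - b')) (E l a b') := by
      simp only [hE]
      have h1 : B2 ^ b = B2 ^ (b - b') * B2 ^ b' := by
        rw [← pow_add]; congr 1; omega
      have h2 : (B1 ^ a) ((B2 ^ b) (I l))
          = (B1 ^ a * B2 ^ (b - b')) ((B2 ^ b') (I l)) := by
        rw [h1]; rfl
      rw [h2, hswap a (b - b')]
      simp only [LinearMap.smul_apply]
      rfl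
    rw [this, step1, map_zero, smul_zero]
  -- Part (e): dimension count
  have hTfin : ∀ l : Fin r, ({ab : ℕ × ℕ | E l ab.1 ab.2 ≠ 0}).Finite := by
    intro l
    have : {ab : ℕ × ℕ | E l ab.1 ab.2 ≠ 0} ⊆
        (fun ab : ℕ × ℕ => ((l, (-1 - (ab.1 : ℤ), -1 - (ab.2 : ℤ))) : Fin r × (ℤ × ℤ))) ⁻¹'
          {lp : Fin r × (ℤ × ℤ) | W lp.1 lp.2 ≠ ⊥} := by
      intro ab hab
      simp only [Set.mem_preimage, Set.mem_setOf_eq]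
      intro hbot
      apply hab
      have := hmem l ab.1 ab.2
      rw [hbot] at this
      simpa using this
    refine Set.Finite.subset (Set.Finite.preimage ?_ hfin) this
    intro x _ y _ hxy
    simp only [Prod.mk.injEq] at hxy
    obtain ⟨-, h2, h3⟩ := hxy
    have h1 : x.1 = y.1 := by omega
    have h2' : x.2 = y.2 := by omega
    exact Prod.ext h1 h2'
  -- build a basis indexed by the sigma type
  haveI : ∀ l : Fin r, Fintype ({ab : ℕ × ℕ | E l ab.1 ab.2 ≠ 0} : Set (ℕ × ℕ)) :=
    fun l => (hTfin l).fintype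
  set σ := (Σ l : Fin r, ({ab : ℕ × ℕ | E l ab.1 ab.2 ≠ 0} : Set (ℕ × ℕ))) with hσ
  set vfam : σ → V := fun s => E s.1 s.2.1.1 s.2.1.2 with hvfam
  have hinj : Function.Injective
      (fun s : σ => ((s.1, (-1 - (s.2.1.1 : ℤ), -1 - (s.2.1.2 : ℤ))) : Fin r × (ℤ × ℤ))) := by
    intro x y hxy
    simp only [Prod.mk.injEq] at hxy
    obtain ⟨h0, h1, h2⟩ := hxy
    have ha : x.2.1.1 = y.2.1.1 := by omega
    have hb : x.2.1.2 = y.2.1.2 := by omega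
    obtain ⟨xl, ⟨⟨xa, xb⟩, hx⟩⟩ := x
    obtain ⟨yl, ⟨⟨ya, yb⟩, hy⟩⟩ := y
    simp only at h0 ha hb
    subst h0; subst ha; subst hb
    rfl
  have hindep : iSupIndep (fun s : σ => W s.1 (-1 - (s.2.1.1 : ℤ), -1 - (s.2.1.2 : ℤ))) := by
    have := hinternal.submodule_iSupIndep
    exact this.comp hinj
  have hli : LinearIndependent ℂ vfam := by
    refine hindep.linearIndependent _ ?_ ?_
    · intro s
      exact hmem s.1 s.2.1.1 s.2.1.2
    · intro s
      exact s.2.2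
  have hsp : ⊤ ≤ Submodule.span ℂ (Set.range vfam) := by
    rw [← hU2top, hU2def, Submodule.span_le]
    rintro x ⟨⟨l, a, b⟩, rfl⟩
    by_cases hx : E l a b = 0
    · show E l a b ∈ (Submodule.span ℂ (Set.range vfam) : Set V)
      rw [hx]; exact Submodule.zero_mem _
    · exact Submodule.subset_span ⟨⟨l, ⟨(a, b), hx⟩⟩, rfl⟩
  let bas : Module.Basis σ ℂ V := Module.Basis.mk hli hsp
  have hrank : Module.finrank ℂ V = Fintype.card σ :=
    (Module.finrank_eq_card_basis bas)
  rw [hrank]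
  refine ⟨hJ0, hquad, hspan, hyoung, ?_⟩
  rw [Fintype.card_sigma]
  congr 1
  ext l
  rw [Set.ncard_eq_toFinset_card', Set.toFinset_card]
end
end

section
/- Let q ∈ ℂ with q ≠ 0 and let A = A(Gr_θ(2;4)). Then: (i) the image of Λ³⁴ is a central element of A, so its non-negative powers form a left and right denominator (Ore) set; (ii) in the localization A[(Λ³⁴)⁻¹], the elements ξ₁ = −Λ¹⁴(Λ³⁴)⁻¹, ξ₂ = −Λ²⁴(Λ³⁴)⁻¹, ξ̄₁ = Λ²³(Λ³⁴)⁻¹, ξ̄₂ = Λ¹³(Λ³⁴)⁻¹ satisfy the relations ξ₁ξ̄₁ = q²ξ̄₁ξ₁, ξ₂ξ̄₂ = q⁻²ξ̄₂ξ₂, ξ₁ξ₂ = q²ξ₂ξ₁, ξ̄₁ξ̄₂ = q⁻²ξ̄₂ξ̄₁, ξ₁ξ̄₂ = ξ̄₂ξ₁, ξ₂ξ̄₁ = ξ̄₁ξ₂, and moreover q·Λ¹²(Λ³⁴)⁻¹ = ξ₁ξ̄₁ − ξ̄₂ξ₂; (iii) the unital ℂ-subalgebra of A[(Λ³⁴)⁻¹]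 generated by ξ₁, ξ₂, ξ̄₁, ξ̄₂ is isomorphic, via x₁ ↦ ξ₁, x₂ ↦ ξ₂, y₁ ↦ ξ̄₁, y₂ ↦ ξ̄₂, to the quotient of the free ℂ-algebra on x₁, x₂, y₁, y₂ by the ideal generated by x₁y₁ − q²y₁x₁, x₂y₂ − q⁻²y₂x₂, x₁x₂ − q²x₂x₁, y₁y₂ − q⁻²y₂y₁, x₁y₂ − y₂x₁, x₂y₁ − y₁x₂. -/
noncomputable section

open FreeAlgebra

/-- The relations of the homogeneous coordinate algebra `A(Gr_θ(2;4))` of the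
noncommutative Klein quadric, on six generators indexed by `0 ↦ Λ¹², 1 ↦ Λ¹³, 2 ↦ Λ¹⁴,
3 ↦ Λ²³, 4 ↦ Λ²⁴, 5 ↦ Λ³⁴`. -/
inductive GrRel (q : ℂ) : FreeAlgebra ℂ (Fin 6) → FreeAlgebra ℂ (Fin 6) → Prop
  | r12_13 : GrRel q (ι ℂ 0 * ι ℂ 1) ((q ^ 2)⁻¹ • (ι ℂ 1 * ι ℂ 0))
  | r12_14 : GrRel q (ι ℂ 0 * ι ℂ 2) ((q ^ 2)⁻¹ • (ι ℂ 2 * ι ℂ 0))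
  | r12_23 : GrRel q (ι ℂ 0 * ι ℂ 3) (q ^ 2 • (ι ℂ 3 * ι ℂ 0))
  | r12_24 : GrRel q (ι ℂ 0 * ι ℂ 4) (q ^ 2 • (ι ℂ 4 * ι ℂ 0))
  | r13_23 : GrRel q (ι ℂ 1 * ι ℂ 3) (q ^ 2 • (ι ℂ 3 * ι ℂ 1))
  | r13_24 : GrRel q (ι ℂ 1 * ι ℂ 4) (q ^ 2 • (ι ℂ 4 * ι ℂ 1))
  | r14_23 : GrRel q (ι ℂ 2 * ι ℂ 3) (q ^ 2 • (ι ℂ 3 * ι ℂ 2))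
  | r14_24 : GrRel q (ι ℂ 2 * ι ℂ 4) (q ^ 2 • (ι ℂ 4 * ι ℂ 2))
  | central34 (i : Fin 6) : GrRel q (ι ℂ 5 * ι ℂ i) (ι ℂ i * ι ℂ 5)
  | r13_14 : GrRel q (ι ℂ 1 * ι ℂ 2) (ι ℂ 2 * ι ℂ 1)
  | r23_24 : GrRel q (ι ℂ 3 * ι ℂ 4) (ι ℂ 4 * ι ℂ 3)
  | pluecker : GrRel q (ι ℂ 0 * ι ℂ 5) (q⁻¹ • (ι ℂ 1 * ι ℂ 4) - q • (ι ℂ 3 * ι ℂ 2))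

/-- The homogeneous coordinate algebra `A = A(Gr_θ(2;4))`. -/
abbrev GrAlg (q : ℂ) := RingQuot (GrRel q)

/-- The images of the minors: `Λm q 0 = Λ¹², Λm q 1 = Λ¹³, Λm q 2 = Λ¹⁴, Λm q 3 = Λ²³,
`Λm q 4 = Λ²⁴`, `Λm q 5 = Λ³⁴`. -/
def Λm (q : ℂ) (i : Fin 6) : GrAlg q := RingQuot.mkAlgHom ℂ (GrRel q) (ι ℂ i)

/-- The relations presenting the coordinate algebra `A(ℝ⁴_θ)` of the affine chart of the
noncommutative four-sphere, on generators `0 ↦ x₁, 1 ↦ x₂, 2 ↦ y₁, 3 ↦ y₂`. -/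
inductive R4Rel (q : ℂ) : FreeAlgebra ℂ (Fin 4) → FreeAlgebra ℂ (Fin 4) → Prop
  | x1y1 : R4Rel q (ι ℂ 0 * ι ℂ 2) (q ^ 2 • (ι ℂ 2 * ι ℂ 0))
  | x2y2 : R4Rel q (ι ℂ 1 * ι ℂ 3) ((q ^ 2)⁻¹ • (ι ℂ 3 * ι ℂ 1))
  | x1x2 : R4Rel q (ι ℂ 0 * ι ℂ 1) (q ^ 2 • (ι ℂ 1 * ι ℂ 0))
  | y1y2 : R4Rel q (ι ℂ 2 * ι ℂ 3) ((q ^ 2)⁻¹ • (ι ℂ 3 * ι ℂ 2))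
  | x1y2 : R4Rel q (ι ℂ 0 * ι ℂ 3) (ι ℂ 3 * ι ℂ 0)
  | x2y1 : R4Rel q (ι ℂ 1 * ι ℂ 2) (ι ℂ 2 * ι ℂ 1)

/-- The coordinate algebra `A(ℝ⁴_θ)` presented by generators and relations. -/
abbrev R4Alg (q : ℂ) := RingQuot (R4Rel q)

/-- The generators of `A(ℝ⁴_θ)`. -/
def xg (q : ℂ) (i : Fin 4) : R4Alg q := RingQuot.mkAlgHom ℂ (R4Rel q) (ι ℂ i)

/-! ### Auxiliary lemmas -/

theorem lam5_central (q : ℂ) (a : GrAlg q) : Λm q 5 * a = a * Λm q 5 := by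
  obtain ⟨x, rfl⟩ := RingQuot.mkAlgHom_surjective ℂ (GrRel q) a
  unfold Λm
  induction x using FreeAlgebra.induction with
  | grade0 r => simp [Algebra.commutes]
  | grade1 i => simpa [map_mul] using RingQuot.mkAlgHom_rel ℂ (GrRel.central34 (q := q) i)
  | mul x y hx hy => rw [map_mul, ← mul_assoc, hx, mul_assoc, hy, mul_assoc]
  | add x y hx hy => rw [map_add, mul_add, add_mul, hx, hy]

section R4side

variable (q : ℂ)

local notation "a" => xg q 0
local notation "b" => xg q 1
local notation "c" => xg q 2
local notation "d" => xg q 3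

theorem hac : a * c = q ^ 2 • (c * a) := by
  simpa [xg, map_mul] using RingQuot.mkAlgHom_rel ℂ (R4Rel.x1y1 (q := q))
theorem hbd : b * d = (q ^ 2)⁻¹ • (d * b) := by
  simpa [xg, map_mul] using RingQuot.mkAlgHom_rel ℂ (R4Rel.x2y2 (q := q))
theorem hab : a * b = q ^ 2 • (b * a) := by
  simpa [xg, map_mul] using RingQuot.mkAlgHom_rel ℂ (R4Rel.x1x2 (q := q))
theorem hcd : c * d = (q ^ 2)⁻¹ • (d * c) := by
  simpa [xg, map_mul] using RingQuot.mkAlgHom_rel ℂ (R4Rel.y1y2 (q := q))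
theorem had : a * d = d * a := by
  simpa [xg, map_mul] using RingQuot.mkAlgHom_rel ℂ (R4Rel.x1y2 (q := q))
theorem hbc : b * c = c * b := by
  simpa [xg, map_mul] using RingQuot.mkAlgHom_rel ℂ (R4Rel.x2y1 (q := q))

theorem hac' (x : R4Alg q) : a * (c * x) = q ^ 2 • (c * (a * x)) := by
  rw [← mul_assoc, hac, smul_mul_assoc, mul_assoc]
theorem hbd' (x : R4Alg q) : b * (d * x) = (q ^ 2)⁻¹ • (d * (b * x)) := by
  rw [← mul_assoc, hbd, smul_mul_assoc, mul_assoc]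
theorem hab' (x : R4Alg q) : a * (b * x) = q ^ 2 • (b * (a * x)) := by
  rw [← mul_assoc, hab, smul_mul_assoc, mul_assoc]
theorem hcd' (x : R4Alg q) : c * (d * x) = (q ^ 2)⁻¹ • (d * (c * x)) := by
  rw [← mul_assoc, hcd, smul_mul_assoc, mul_assoc]
theorem had' (x : R4Alg q) : a * (d * x) = d * (a * x) := by
  rw [← mul_assoc, had, mul_assoc]
theorem hbc' (x : R4Alg q) : b * (c * x) = c * (b * x) := by
  rw [← mul_assoc, hbc, mul_assoc]

/-- The images of the six minors in `A(ℝ⁴_θ)`, defining the algebra map `ψ`. -/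
def gv : Fin 6 → R4Alg q :=
  ![q⁻¹ • (xg q 0 * xg q 2 - xg q 3 * xg q 1), xg q 3, (-1 : ℂ) • xg q 0, xg q 2,
    (-1 : ℂ) • xg q 1, 1]

theorem gv0 : gv q 0 = q⁻¹ • (a * c - d * b) := rfl
theorem gv1 : gv q 1 = d := rfl
theorem gv2 : gv q 2 = (-1 : ℂ) • a := rfl
theorem gv3 : gv q 3 = c := rfl
theorem gv4 : gv q 4 = (-1 : ℂ) • b := rfl
theorem gv5 : gv q 5 = 1 := rfl

theorem gv_rel {q : ℂ} (hq : q ≠ 0) :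
    ∀ ⦃x y : FreeAlgebra ℂ (Fin 6)⦄, GrRel q x y →
      FreeAlgebra.lift ℂ (gv q) x = FreeAlgebra.lift ℂ (gv q) y := by
  have s1 : q ^ 2 * (q ^ 2)⁻¹ = 1 := mul_inv_cancel₀ (pow_ne_zero 2 hq)
  have s2 : (q ^ 2)⁻¹ * q ^ 2 = 1 := inv_mul_cancel₀ (pow_ne_zero 2 hq)
  intro x y h
  induction h <;>
    · simp only [map_mul, map_smul, map_sub, lift_ι_apply,
        gv0, gv1, gv2, gv3, gv4, gv5,
        mul_one, one_mul, sub_mul, mul_sub, smul_sub, smul_smul,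
        smul_mul_assoc, mul_smul_comm, mul_assoc,
        hac q, hbd q, hab q, hcd q, had q, hbc q,
        hac' q, hbd' q, hab' q, hcd' q, had' q, hbc' q,
        s1, s2, one_smul]
      try (match_scalars <;> field_simp <;> ring)

end R4side

set_option maxHeartbeats 1000000 in
/-- Localization of `A(Gr_θ(2;4))` at the central minor `Λ³⁴`: `Λ³⁴` is central (hence
its powers form an Ore set); in any universal localization `Loc` inverting `Λ³⁴`, the
elements `ξ₁ = −Λ¹⁴(Λ³⁴)⁻¹, ξ₂ = −Λ²⁴(Λ³⁴)⁻¹, ξ̄₁ = Λ²³(Λ³⁴)⁻¹, ξ̄₂ = Λ¹³(Λ³⁴)⁻¹`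
satisfy the braided plane relations and `qΛ¹²(Λ³⁴)⁻¹ = ξ₁ξ̄₁ − ξ̄₂ξ₂`; and the unital
subalgebra they generate is isomorphic to the presented algebra `A(ℝ⁴_θ)` via
`x₁ ↦ ξ₁, x₂ ↦ ξ₂, y₁ ↦ ξ̄₁, y₂ ↦ ξ̄₂`. -/
theorem grassmannian_localization_R4 (q : ℂ) (hq : q ≠ 0)
    (Loc : Type) [Ring Loc] [Algebra ℂ Loc] (φ : GrAlg q →ₐ[ℂ] Loc) (v : Loc)
    (hv : φ (Λm q 5) * v = 1) (hv' : v * φ (Λm q 5) = 1)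
    (huniv : ∀ (B : Type) [Ring B] [Algebra ℂ B] (ψ : GrAlg q →ₐ[ℂ] B),
      IsUnit (ψ (Λm q 5)) → ∃! χ : Loc →ₐ[ℂ] B, χ.comp φ = ψ)
    (ξ₁ ξ₂ ξb₁ ξb₂ : Loc)
    (hξ₁ : ξ₁ = -(φ (Λm q 2) * v)) (hξ₂ : ξ₂ = -(φ (Λm q 4) * v))
    (hξb₁ : ξb₁ = φ (Λm q 3) * v) (hξb₂ : ξb₂ = φ (Λm q 1) * v) :
    (∀ a : GrAlg q, Λm q 5 * a = a * Λm q 5) ∧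
      Nonempty (OreLocalization.OreSet (Submonoid.powers (Λm q 5))) ∧
      (ξ₁ * ξb₁ = q ^ 2 • (ξb₁ * ξ₁) ∧ ξ₂ * ξb₂ = (q ^ 2)⁻¹ • (ξb₂ * ξ₂) ∧
        ξ₁ * ξ₂ = q ^ 2 • (ξ₂ * ξ₁) ∧ ξb₁ * ξb₂ = (q ^ 2)⁻¹ • (ξb₂ * ξb₁) ∧
        ξ₁ * ξb₂ = ξb₂ * ξ₁ ∧ ξ₂ * ξb₁ = ξb₁ * ξ₂ ∧
        q • (φ (Λm q 0) * v) = ξ₁ * ξb₁ - ξb₂ * ξ₂) ∧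
      ∃ Φ : R4Alg q →ₐ[ℂ] Loc, Function.Injective Φ ∧
        Φ (xg q 0) = ξ₁ ∧ Φ (xg q 1) = ξ₂ ∧ Φ (xg q 2) = ξb₁ ∧ Φ (xg q 3) = ξb₂ ∧
        Φ.range = Algebra.adjoin ℂ {ξ₁, ξ₂, ξb₁, ξb₂} := by
  have s1 : q ^ 2 * (q ^ 2)⁻¹ = 1 := mul_inv_cancel₀ (pow_ne_zero 2 hq)
  have s2 : (q ^ 2)⁻¹ * q ^ 2 = 1 := inv_mul_cancel₀ (pow_ne_zero 2 hq)
  -- powers of Λ³⁴ are central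
  have hc : ∀ (n : ℕ) (r : GrAlg q), Λm q 5 ^ n * r = r * Λm q 5 ^ n := by
    intro n r
    induction n with
    | zero => simp
    | succ n ih =>
        rw [pow_succ, mul_assoc, lam5_central, ← mul_assoc, ih, mul_assoc]
  have hpowc : ∀ (s : Submonoid.powers (Λm q 5)) (r : GrAlg q), (s : GrAlg q) * r = r * s := by
    rintro ⟨s, n, rfl⟩ r
    exact hc n r
  -- Ore set
  have hore : Nonempty (OreLocalization.OreSet (Submonoid.powers (Λm q 5))) := by
    refine ⟨⟨fun r₁ r₂ s h => ⟨s, ?_⟩, fun r _ => r, fun _ s => s, fun r s => hpowc s r⟩⟩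
    rw [hpowc, hpowc, h]
  -- commutation of v with the image of φ
  have hvc : ∀ x : GrAlg q, v * φ x = φ x * v := by
    intro x
    have h5 : φ (Λm q 5) * φ x = φ x * φ (Λm q 5) := by
      rw [← map_mul, ← map_mul, lam5_central]
    calc v * φ x = v * φ x * (φ (Λm q 5) * v) := by rw [hv, mul_one]
      _ = v * (φ x * φ (Λm q 5)) * v := by
          rw [← mul_assoc (v * φ x), mul_assoc v (φ x)]
      _ = v * (φ (Λm q 5) * φ x) * v := by rw [h5]
      _ = v * φ (Λm q 5) * (φ x * v) := by
          rw [← mul_assoc v (φ (Λm q 5)), mul_assoc (v * φ (Λm q 5))]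
      _ = φ x * v := by rw [hv', one_mul]
  have hPv : ∀ x y : GrAlg q, (φ x * v) * (φ y * v) = φ (x * y) * (v * v) := by
    intro x y
    rw [map_mul, mul_assoc (φ x) v (φ y * v), ← mul_assoc v (φ y) v, hvc,
      mul_assoc (φ y) v v, ← mul_assoc (φ x) (φ y) (v * v)]
  have hmain : ∀ (x y : GrAlg q) (t : ℂ), x * y = t • (y * x) →
      (φ x * v) * (φ y * v) = t • ((φ y * v) * (φ x * v)) := by
    intro x y t h
    rw [hPv, hPv, h, map_smul, smul_mul_assoc]
  -- relations in GrAlg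
  have h23 : Λm q 2 * Λm q 3 = q ^ 2 • (Λm q 3 * Λm q 2) := by
    simpa [Λm, map_mul] using RingQuot.mkAlgHom_rel ℂ (GrRel.r14_23 (q := q))
  have h14 : Λm q 1 * Λm q 4 = q ^ 2 • (Λm q 4 * Λm q 1) := by
    simpa [Λm, map_mul] using RingQuot.mkAlgHom_rel ℂ (GrRel.r13_24 (q := q))
  have h41 : Λm q 4 * Λm q 1 = (q ^ 2)⁻¹ • (Λm q 1 * Λm q 4) := by
    rw [h14, smul_smul, s2, one_smul]
  have h24 : Λm q 2 * Λm q 4 = q ^ 2 • (Λm q 4 * Λm q 2) := by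
    simpa [Λm, map_mul] using RingQuot.mkAlgHom_rel ℂ (GrRel.r14_24 (q := q))
  have h13 : Λm q 1 * Λm q 3 = q ^ 2 • (Λm q 3 * Λm q 1) := by
    simpa [Λm, map_mul] using RingQuot.mkAlgHom_rel ℂ (GrRel.r13_23 (q := q))
  have h31 : Λm q 3 * Λm q 1 = (q ^ 2)⁻¹ • (Λm q 1 * Λm q 3) := by
    rw [h13, smul_smul, s2, one_smul]
  have h12c : Λm q 1 * Λm q 2 = Λm q 2 * Λm q 1 := by
    simpa [Λm, map_mul] using RingQuot.mkAlgHom_rel ℂ (GrRel.r13_14 (q := q))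
  have h21 : Λm q 2 * Λm q 1 = (1 : ℂ) • (Λm q 1 * Λm q 2) := by rw [one_smul, h12c]
  have h34c : Λm q 3 * Λm q 4 = Λm q 4 * Λm q 3 := by
    simpa [Λm, map_mul] using RingQuot.mkAlgHom_rel ℂ (GrRel.r23_24 (q := q))
  have h43 : Λm q 4 * Λm q 3 = (1 : ℂ) • (Λm q 3 * Λm q 4) := by rw [one_smul, h34c]
  have h05 : Λm q 0 * Λm q 5
      = q⁻¹ • (Λm q 1 * Λm q 4) - q • (Λm q 3 * Λm q 2) := by
    simpa [Λm, map_mul, map_sub, map_smul] using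
      RingQuot.mkAlgHom_rel ℂ (GrRel.pluecker (q := q))
  -- the six relations in Loc
  have hr1 : ξ₁ * ξb₁ = q ^ 2 • (ξb₁ * ξ₁) := by
    rw [hξ₁, hξb₁, neg_mul, mul_neg, smul_neg, neg_inj]
    exact hmain _ _ _ h23
  have hr2 : ξ₂ * ξb₂ = (q ^ 2)⁻¹ • (ξb₂ * ξ₂) := by
    rw [hξ₂, hξb₂, neg_mul, mul_neg, smul_neg, neg_inj]
    exact hmain _ _ _ h41
  have hr3 : ξ₁ * ξ₂ = q ^ 2 • (ξ₂ * ξ₁) := by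
    rw [hξ₁, hξ₂, neg_mul_neg, neg_mul_neg]
    exact hmain _ _ _ h24
  have hr4 : ξb₁ * ξb₂ = (q ^ 2)⁻¹ • (ξb₂ * ξb₁) := by
    rw [hξb₁, hξb₂]
    exact hmain _ _ _ h31
  have hr5 : ξ₁ * ξb₂ = ξb₂ * ξ₁ := by
    rw [hξ₁, hξb₂, neg_mul, mul_neg, neg_inj]
    have := hmain _ _ _ h21
    rwa [one_smul] at this
  have hr6 : ξ₂ * ξb₁ = ξb₁ * ξ₂ := by
    rw [hξ₂, hξb₁, neg_mul, mul_neg, neg_inj]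
    have := hmain _ _ _ h43
    rwa [one_smul] at this
  have hpl : q • (φ (Λm q 0) * v) = ξ₁ * ξb₁ - ξb₂ * ξ₂ := by
    have h0 : φ (Λm q 0) * v = φ (Λm q 0 * Λm q 5) * (v * v) := by
      rw [map_mul, mul_assoc, ← mul_assoc (φ (Λm q 5)) v v, hv, one_mul]
    have e1 : ξ₁ * ξb₁ = -(φ (Λm q 2 * Λm q 3) * (v * v)) := by
      rw [hξ₁, hξb₁, neg_mul, hPv]
    have e2 : ξb₂ * ξ₂ = -(φ (Λm q 1 * Λm q 4) * (v * v)) := by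
      rw [hξb₂, hξ₂, mul_neg, hPv]
    have e3 : φ (Λm q 2 * Λm q 3) = q ^ 2 • φ (Λm q 3 * Λm q 2) := by
      rw [h23, map_smul]
    rw [h0, h05, e1, e2, e3, map_sub, map_smul, map_smul]
    simp only [sub_mul, smul_mul_assoc, smul_sub, smul_smul, smul_neg, map_mul]
    match_scalars <;> field_simp <;> ring
  refine ⟨lam5_central q, hore, ⟨hr1, hr2, hr3, hr4, hr5, hr6, hpl⟩, ?_⟩
  -- the map Φ
  have hΦrel : ∀ ⦃x y : FreeAlgebra ℂ (Fin 4)⦄, R4Rel q x y →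
      FreeAlgebra.lift ℂ ![ξ₁, ξ₂, ξb₁, ξb₂] x = FreeAlgebra.lift ℂ ![ξ₁, ξ₂, ξb₁, ξb₂] y := by
    intro x y h
    induction h <;>
      simp only [map_mul, map_smul, lift_ι_apply, Matrix.cons_val_zero, Matrix.cons_val_one,
        Matrix.head_cons, Matrix.cons_val_two, Matrix.tail_cons, Matrix.cons_val_three] <;>
      first
        | exact hr1 | exact hr2 | exact hr3 | exact hr4 | exact hr5 | exact hr6
  refine ⟨RingQuot.liftAlgHom ℂ ⟨FreeAlgebra.lift ℂ ![ξ₁, ξ₂, ξb₁, ξb₂], hΦrel⟩, ?_, ?_, ?_, ?_, ?_, ?_⟩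
  case refine_2 =>
    rw [xg, RingQuot.liftAlgHom_mkAlgHom_apply, lift_ι_apply]; rfl
  case refine_3 =>
    rw [xg, RingQuot.liftAlgHom_mkAlgHom_apply, lift_ι_apply]; rfl
  case refine_4 =>
    rw [xg, RingQuot.liftAlgHom_mkAlgHom_apply, lift_ι_apply]; rfl
  case refine_5 =>
    rw [xg, RingQuot.liftAlgHom_mkAlgHom_apply, lift_ι_apply]; rfl
  case refine_6 =>
    have hrange : (RingQuot.liftAlgHom ℂ
        ⟨FreeAlgebra.lift ℂ ![ξ₁, ξ₂, ξb₁, ξb₂], hΦrel⟩).range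
        = (FreeAlgebra.lift ℂ ![ξ₁, ξ₂, ξb₁, ξb₂]).range := by
      apply le_antisymm
      · rintro z hz
        obtain ⟨w, rfl⟩ := hz
        obtain ⟨y, rfl⟩ := RingQuot.mkAlgHom_surjective ℂ (R4Rel q) w
        exact ⟨y, (RingQuot.liftAlgHom_mkAlgHom_apply _ _ _ _).symm⟩
      · rintro z ⟨y, rfl⟩
        exact ⟨RingQuot.mkAlgHom ℂ (R4Rel q) y, RingQuot.liftAlgHom_mkAlgHom_apply _ _ _ _⟩
    rw [hrange, ← Algebra.adjoin_range_eq_range_freeAlgebra_lift]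
    congr 1
    ext z
    simp only [Matrix.range_cons, Matrix.range_empty, Set.union_empty, Set.mem_union,
      Set.mem_insert_iff, Set.mem_singleton_iff, Set.union_singleton]
    tauto
  case refine_1 =>
    -- injectivity via the inverse map χ built from the universal property
    set ψ : GrAlg q →ₐ[ℂ] R4Alg q :=
      RingQuot.liftAlgHom ℂ ⟨FreeAlgebra.lift ℂ (gv q), gv_rel hq⟩ with hψdef
    have hψ : ∀ i, ψ (Λm q i) = gv q i := by
      intro i; rw [hψdef, Λm, RingQuot.liftAlgHom_mkAlgHom_apply, lift_ι_apply]
    have hψ5 : ψ (Λm q 5) = 1 := by rw [hψ 5, gv5]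
    obtain ⟨χ, hχ, -⟩ := huniv (R4Alg q) ψ (by rw [hψ5]; exact isUnit_one)
    have hχφ : ∀ z, χ (φ z) = ψ z := fun z => by
      rw [← AlgHom.comp_apply, hχ]
    have hχv : χ v = 1 := by
      have h := congrArg χ hv'
      rwa [map_mul, hχφ, hψ5, mul_one, map_one] at h
    have hm1 : ((-1 : ℂ) * (-1 : ℂ)) = 1 := by norm_num
    have hχξ₁ : χ ξ₁ = xg q 0 := by
      have hξ₁' : ξ₁ = (-1 : ℂ) • (φ (Λm q 2) * v) := by rw [hξ₁, neg_one_smul]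
      rw [hξ₁', map_smul, map_mul, hχφ, hχv, mul_one, hψ 2, gv2, smul_smul, hm1, one_smul]
    have hχξ₂ : χ ξ₂ = xg q 1 := by
      have hξ₂' : ξ₂ = (-1 : ℂ) • (φ (Λm q 4) * v) := by rw [hξ₂, neg_one_smul]
      rw [hξ₂', map_smul, map_mul, hχφ, hχv, mul_one, hψ 4, gv4, smul_smul, hm1, one_smul]
    have hχξb₁ : χ ξb₁ = xg q 2 := by
      rw [hξb₁, map_mul, hχφ, hχv, mul_one, hψ 3, gv3]
    have hχξb₂ : χ ξb₂ = xg q 3 := by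
      rw [hξb₂, map_mul, hχφ, hχv, mul_one, hψ 1, gv1]
    have hid : χ.comp (RingQuot.liftAlgHom ℂ ⟨FreeAlgebra.lift ℂ ![ξ₁, ξ₂, ξb₁, ξb₂], hΦrel⟩)
        = AlgHom.id ℂ (R4Alg q) := by
      apply RingQuot.ringQuot_ext'
      apply FreeAlgebra.hom_ext
      funext i
      fin_cases i <;>
        simp [AlgHom.comp_apply, RingQuot.liftAlgHom_mkAlgHom_apply, lift_ι_apply,
          hχξ₁, hχξ₂, hχξb₁, hχξb₂, xg]
    intro z₁ z₂ hz
    have := congrArg χ hz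
    rwa [← AlgHom.comp_apply, ← AlgHom.comp_apply, hid, AlgHom.id_apply, AlgHom.id_apply] at this
end
end

section
/- Let q ∈ ℂ with q ≠ 0 and let A = A(Gr_θ(2;4)). Set X = (q/2)(Λ¹² − Λ³⁴) and R = (q/2)(Λ¹² + Λ³⁴) in A. Then X and R commute with each other, and the sphere relation q·Λ¹³Λ²⁴ − q·Λ¹⁴Λ²³ + X² = R² holds in A. (Under the *-structure with Λ¹³† = qΛ²⁴ and Λ¹⁴† = −q⁻¹Λ²³, this relation reads Λ¹³Λ¹³† + q²Λ¹⁴Λ¹⁴† + X² = R².) -/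
noncomputable section

open FreeAlgebra

/-- With `X = (q/2)(Λ¹² − Λ³⁴)` and `R = (q/2)(Λ¹² + Λ³⁴)`, the elements `X` and `R`
commute and the sphere relation `qΛ¹³Λ²⁴ − qΛ¹⁴Λ²³ + X² = R²` holds in
`A(Gr_θ(2;4))`. -/
theorem sphere_relation (q : ℂ) (hq : q ≠ 0)
    (X R : GrAlg q)
    (hX : X = (q / 2) • (Λm q 0 - Λm q 5))
    (hR : R = (q / 2) • (Λm q 0 + Λm q 5)) :
    X * R = R * X ∧
      q • (Λm q 1 * Λm q 4) - q • (Λm q 2 * Λm q 3) + X * X = R * R := by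
  have hba : Λm q 5 * Λm q 0 = Λm q 0 * Λm q 5 := by
    have h := RingQuot.mkAlgHom_rel ℂ (GrRel.central34 (q := q) 0)
    simpa [Λm, map_mul] using h
  have key : Λm q 0 * Λm q 5 = q⁻¹ • (Λm q 1 * Λm q 4) - q • (Λm q 3 * Λm q 2) := by
    have h := RingQuot.mkAlgHom_rel ℂ (GrRel.pluecker (q := q))
    simpa [Λm, map_mul, map_sub, map_smul] using h
  have h23 : Λm q 2 * Λm q 3 = (q ^ 2) • (Λm q 3 * Λm q 2) := by
    have h := RingQuot.mkAlgHom_rel ℂ (GrRel.r14_23 (q := q))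
    simpa [Λm, map_mul, map_smul] using h
  have hL14 : Λm q 1 * Λm q 4 =
      q • (Λm q 0 * Λm q 5) + (q ^ 2) • (Λm q 3 * Λm q 2) := by
    rw [key, smul_sub, smul_smul, mul_inv_cancel₀ hq, one_smul, smul_smul]
    module
  constructor
  · simp only [hX, hR, smul_mul_assoc, mul_smul_comm, sub_mul, mul_sub, add_mul,
      mul_add, hba]
    module
  · simp only [hX, hR, smul_mul_assoc, mul_smul_comm, sub_mul, mul_sub, add_mul,
      mul_add, hba, hL14, h23]
    module
end
end

section
/- Let q ∈ ℂ with q ≠ 0 and let A_ℓ be the quotient of the free associative ℂ-algebra on two generators w₁, w₂ by the two-sided ideal generated by w₁w₂ − q²w₂w₁. Then the non-negative powers of w₁ form a left (and right) denominator (Ore) set in A_ℓ, and in the Ore localization A_ℓ[w₁⁻¹] the unital ℂ-subalgebra generated by y = w₁⁻¹w₂ is isomorphic to the commutative polynomial ring ℂ[T] via T ↦ w₁⁻¹w₂; moreover this subalgebra is exactly the set of degree-zero elements of the localization, where w₁ and w₂ have degree 1 and w₁⁻¹ has degree −1. -/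
noncomputable section

open FreeAlgebra

/-- The relation `w₁w₂ = q²w₂w₁` defining the homogeneous coordinate algebra
`A_ℓ = A(ℂP¹_θ)` of the noncommutative projective line (generators indexed `0, 1`). -/
inductive PLRel (q : ℂ) : FreeAlgebra ℂ (Fin 2) → FreeAlgebra ℂ (Fin 2) → Prop
  | r : PLRel q (ι ℂ 0 * ι ℂ 1) (q ^ 2 • (ι ℂ 1 * ι ℂ 0))

/-- The homogeneous coordinate algebra `A_ℓ = A(ℂP¹_θ)`. -/
abbrev PLAlg (q : ℂ) := RingQuot (PLRel q)

/-- The generators `w₁, w₂` of `A_ℓ` (indexed by `0, 1`). -/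
def wL (q : ℂ) (i : Fin 2) : PLAlg q := RingQuot.mkAlgHom ℂ (PLRel q) (ι ℂ i)

/-- The degree-`m` homogeneous component of `A_ℓ`: the span of the ordered monomials
`w₁^a w₂^b` with `a + b = m`. -/
def degPart (q : ℂ) (m : ℕ) : Submodule ℂ (PLAlg q) :=
  Submodule.span ℂ {z : PLAlg q | ∃ a b : ℕ, a + b = m ∧ z = wL q 0 ^ a * wL q 1 ^ b}

namespace PLaux

variable (q : ℂ)

theorem rel : wL q 0 * wL q 1 = (q ^ 2 : ℂ) • (wL q 1 * wL q 0) := by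
  have h := RingQuot.mkAlgHom_rel ℂ (PLRel.r (q := q))
  simpa only [map_mul, map_smul, wL] using h

/-- The algebra endomorphism `w₁ ↦ w₁`, `w₂ ↦ c • w₂`. -/
def scl (c : ℂ) : PLAlg q →ₐ[ℂ] PLAlg q :=
  RingQuot.liftAlgHom ℂ ⟨FreeAlgebra.lift ℂ ![wL q 0, c • wL q 1], by
    rintro _ _ ⟨⟩
    simp only [map_mul, map_smul, FreeAlgebra.lift_ι_apply, Matrix.cons_val_zero,
      Matrix.cons_val_one, Matrix.head_cons]
    rw [mul_smul_comm, smul_mul_assoc, rel q, smul_comm]⟩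

@[simp] theorem scl_w0 (c : ℂ) : scl q c (wL q 0) = wL q 0 := by
  simp [scl, wL, RingQuot.liftAlgHom_mkAlgHom_apply]

@[simp] theorem scl_w1 (c : ℂ) : scl q c (wL q 1) = c • wL q 1 := by
  simp [scl, wL, RingQuot.liftAlgHom_mkAlgHom_apply]

theorem wdef (i : Fin 2) : RingQuot.mkAlgHom ℂ (PLRel q) (ι ℂ i) = wL q i := rfl

theorem comm_w1 (a : PLAlg q) : wL q 0 * a = scl q (q ^ 2) a * wL q 0 := by
  obtain ⟨x, rfl⟩ := RingQuot.mkAlgHom_surjective ℂ (PLRel q) a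
  induction x using FreeAlgebra.induction with
  | grade0 r =>
      rw [AlgHom.commutes, AlgHom.commutes, Algebra.commutes]
  | grade1 i =>
      fin_cases i
      · show wL q 0 * wL q 0 = scl q (q ^ 2) (wL q 0) * wL q 0
        rw [scl_w0]
      · show wL q 0 * wL q 1 = scl q (q ^ 2) (wL q 1) * wL q 0
        rw [scl_w1, rel q, smul_mul_assoc]
  | mul x y hx hy =>
      rw [map_mul, map_mul, ← mul_assoc, hx, mul_assoc, hy, ← mul_assoc]
  | add x y hx hy =>
      rw [map_add, map_add, mul_add, add_mul, hx, hy]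

theorem scl_scl (c d : ℂ) (a : PLAlg q) : scl q c (scl q d a) = scl q (c * d) a := by
  have : (scl q c).comp (scl q d) = scl q (c * d) := by
    apply RingQuot.ringQuot_ext'
    apply FreeAlgebra.hom_ext
    funext i
    fin_cases i <;>
      simp [wdef, scl_w0, scl_w1, map_smul, smul_smul, mul_comm]
  exact DFunLike.congr_fun this a

theorem scl_one (a : PLAlg q) : scl q 1 a = a := by
  have : scl q 1 = AlgHom.id ℂ (PLAlg q) := by
    apply RingQuot.ringQuot_ext'
    apply FreeAlgebra.hom_ext
    funext i
    fin_cases i <;>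
      simp [wdef, scl_w0, scl_w1]
  rw [this]; rfl

end PLaux

namespace PLaux

variable (q : ℂ)

theorem iter_mul (c : ℂ) (n : ℕ) (x y : PLAlg q) :
    (⇑(scl q c))^[n] (x * y) = (⇑(scl q c))^[n] x * (⇑(scl q c))^[n] y := by
  induction n generalizing x y with
  | zero => rfl
  | succ n ih => simp only [Function.iterate_succ_apply, map_mul, ih]

theorem iter_w0 (c : ℂ) (n : ℕ) : (⇑(scl q c))^[n] (wL q 0) = wL q 0 := by
  induction n with
  | zero => rfl
  | succ n ih => simp only [Function.iterate_succ_apply, scl_w0, ih]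

theorem iter_w0_pow (c : ℂ) (n m : ℕ) : (⇑(scl q c))^[n] (wL q 0 ^ m) = wL q 0 ^ m := by
  induction m with
  | zero => simp only [pow_zero]; exact Function.iterate_fixed (map_one _) n
  | succ m ih => rw [pow_succ, iter_mul, ih, iter_w0]

theorem comm_w1_pow (n : ℕ) (a : PLAlg q) :
    wL q 0 ^ n * a = (⇑(scl q (q ^ 2)))^[n] a * wL q 0 ^ n := by
  induction n generalizing a with
  | zero => simp
  | succ n ih =>
      rw [pow_succ, mul_assoc, comm_w1, ← mul_assoc, ih, Function.iterate_succ_apply,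
        mul_assoc, ← pow_succ]

theorem leftinv (hq : q ≠ 0) (a : PLAlg q) : scl q (q ^ 2) (scl q (q ^ 2)⁻¹ a) = a := by
  rw [scl_scl, mul_inv_cancel₀ (pow_ne_zero 2 hq), scl_one]

theorem comm_w1_pow' (hq : q ≠ 0) (n : ℕ) (a : PLAlg q) :
    a * wL q 0 ^ n = wL q 0 ^ n * (⇑(scl q (q ^ 2)⁻¹))^[n] a := by
  rw [comm_w1_pow, (Function.LeftInverse.iterate (leftinv q hq) n) a]

def oreset (hq : q ≠ 0) : OreLocalization.OreSet (Submonoid.powers (wL q 0)) where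
  ore_right_cancel r₁ r₂ s h := by
    obtain ⟨n, hn⟩ := (Submonoid.mem_powers_iff _ _).mp s.2
    refine ⟨⟨wL q 0 ^ n, Submonoid.pow_mem _ (Submonoid.mem_powers _) n⟩, ?_⟩
    rw [← hn] at h
    rw [comm_w1_pow' q hq, comm_w1_pow' q hq] at h
    have h2 := congrArg (⇑(scl q (q ^ 2)))^[n] h
    simpa only [iter_mul, iter_w0_pow, Function.LeftInverse.iterate (leftinv q hq) n r₁,
      Function.LeftInverse.iterate (leftinv q hq) n r₂] using h2
  oreNum r s := (⇑(scl q (q ^ 2)))^[Classical.choose ((Submonoid.mem_powers_iff _ _).mp s.2)] r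
  oreDenom _ s := s
  ore_eq r s := by
    have hn := Classical.choose_spec ((Submonoid.mem_powers_iff _ _).mp s.2)
    conv_lhs => rw [← hn]
    conv_rhs => arg 2; rw [← hn]
    exact comm_w1_pow q _ r

end PLaux

namespace PLaux

variable (q : ℂ)

/-- The representation space: functions `ℤ × ℕ →₀ ℂ`. -/
abbrev Wsp : Type := (ℤ × ℕ) →₀ ℂ

/-- Basis vectors. -/
def ee (p : ℤ × ℕ) : Wsp := Finsupp.single p 1

def T1 : Module.End ℂ Wsp :=
  Finsupp.lsum ℂ fun p => LinearMap.toSpanSingleton ℂ Wsp (q ^ (2 * p.2) • ee (p.1 + 1, p.2))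

def T2 : Module.End ℂ Wsp :=
  Finsupp.lsum ℂ fun p => LinearMap.toSpanSingleton ℂ Wsp (ee (p.1, p.2 + 1))

def T1i : Module.End ℂ Wsp :=
  Finsupp.lsum ℂ fun p => LinearMap.toSpanSingleton ℂ Wsp ((q ^ (2 * p.2))⁻¹ • ee (p.1 - 1, p.2))

@[simp] theorem T1_single (p : ℤ × ℕ) (c : ℂ) :
    T1 q (Finsupp.single p c) = (c * q ^ (2 * p.2)) • ee (p.1 + 1, p.2) := by
  simp [T1, mul_smul]

@[simp] theorem T2_single (p : ℤ × ℕ) (c : ℂ) :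
    T2 (Finsupp.single p c) = c • ee (p.1, p.2 + 1) := by
  simp [T2]

@[simp] theorem T1i_single (p : ℤ × ℕ) (c : ℂ) :
    T1i q (Finsupp.single p c) = (c * (q ^ (2 * p.2))⁻¹) • ee (p.1 - 1, p.2) := by
  simp [T1i, mul_smul]

theorem relT : T1 q * T2 = (q ^ 2 : ℂ) • (T2 * T1 q) := by
  apply Finsupp.lhom_ext
  intro p c
  simp only [Module.End.mul_apply, LinearMap.smul_apply, T1_single, T2_single, ee, map_smul,
    Finsupp.smul_single, smul_eq_mul, mul_one, T1_single, smul_smul]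
  congr 1
  ring

theorem T1_T1i (hq : q ≠ 0) : T1 q * T1i q = 1 := by
  apply Finsupp.lhom_ext
  intro p c
  have hqp : (q ^ (2 * p.2)) ≠ 0 := pow_ne_zero _ hq
  simp only [Module.End.mul_apply, T1i_single, ee, map_smul, T1_single, smul_smul,
    Finsupp.smul_single, smul_eq_mul, mul_one, Module.End.one_apply]
  rw [mul_assoc, inv_mul_cancel₀ hqp, mul_one, sub_add_cancel]

theorem T1i_T1 (hq : q ≠ 0) : T1i q * T1 q = 1 := by
  apply Finsupp.lhom_ext
  intro p c
  have hqp : (q ^ (2 * p.2)) ≠ 0 := pow_ne_zero _ hq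
  simp only [Module.End.mul_apply, T1i_single, ee, map_smul, T1_single, smul_smul,
    Finsupp.smul_single, smul_eq_mul, mul_one, Module.End.one_apply]
  rw [mul_assoc, mul_inv_cancel₀ hqp, mul_one, add_sub_cancel_right]

/-- The representation of `A_ℓ` on `Wsp`. -/
def ψB : PLAlg q →ₐ[ℂ] Module.End ℂ Wsp :=
  RingQuot.liftAlgHom ℂ ⟨FreeAlgebra.lift ℂ ![T1 q, T2], by
    rintro _ _ ⟨⟩
    simp only [map_mul, map_smul, FreeAlgebra.lift_ι_apply, Matrix.cons_val_zero,
      Matrix.cons_val_one, Matrix.head_cons]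
    exact relT q⟩

@[simp] theorem ψB_w0 : ψB q (wL q 0) = T1 q := by
  simp [ψB, wL, RingQuot.liftAlgHom_mkAlgHom_apply]

@[simp] theorem ψB_w1 : ψB q (wL q 1) = T2 := by
  simp [ψB, wL, RingQuot.liftAlgHom_mkAlgHom_apply]

/-- `Y = T1⁻¹ T2`, the image of `w₁⁻¹w₂`. -/
def Yop : Module.End ℂ Wsp := T1i q * T2

theorem Yop_pow (hq : q ≠ 0) (k : ℕ) :
    ∃ c : ℂ, c ≠ 0 ∧ ((Yop q) ^ k) (ee (0, 0)) = c • ee (-(k : ℤ), k) := by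
  induction k with
  | zero => exact ⟨1, one_ne_zero, by simp⟩
  | succ k ih =>
      obtain ⟨c, hc, hY⟩ := ih
      refine ⟨c * (q ^ (2 * (k + 1)))⁻¹, by
        exact mul_ne_zero hc (inv_ne_zero (pow_ne_zero _ hq)), ?_⟩
      rw [pow_succ', Module.End.mul_apply, hY, map_smul]
      simp only [Yop, Module.End.mul_apply, ee, T2_single, map_smul, T1i_single, one_mul,
        Finsupp.smul_single, smul_eq_mul, mul_one, smul_smul]
      congr 2
      push_cast
      ring

theorem aevalY_inj (hq : q ≠ 0) :
    Function.Injective (Polynomial.aeval (Yop q) : Polynomial ℂ →ₐ[ℂ] Module.End ℂ Wsp) := by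
  rw [injective_iff_map_eq_zero]
  intro p hp
  choose c hc0 hc using Yop_pow q hq
  rw [Polynomial.aeval_eq_sum_range] at hp
  have h0 : ∀ k : ℕ, k < p.natDegree + 1 → p.coeff k = 0 := by
    intro k hk
    have h := congrArg (fun f : Module.End ℂ Wsp => (f (ee (0, 0))) (-(k : ℤ), k)) hp
    simp only [LinearMap.zero_apply, Finsupp.coe_zero, Pi.zero_apply] at h
    simp only [LinearMap.sum_apply, LinearMap.smul_apply, hc, smul_smul] at h
    simp only [Finsupp.finset_sum_apply, Finsupp.smul_apply, ee, Finsupp.single_apply,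
      smul_eq_mul, mul_one, mul_ite, mul_zero] at h
    have hcond : ∀ i : ℕ, (((-(i : ℤ), i) : ℤ × ℕ) = (-(k : ℤ), k)) ↔ i = k := by
      intro i
      simp [Prod.ext_iff]
    simp only [hcond] at h
    rw [Finset.sum_ite_eq' (Finset.range (p.natDegree + 1)) k
      (fun i => p.coeff i * c i)] at h
    rw [if_pos (Finset.mem_range.mpr hk)] at h
    exact (mul_eq_zero.mp h).resolve_right (hc0 k)
  ext k
  rcases lt_or_ge k (p.natDegree + 1) with h | h
  · simpa using h0 k h
  · simpa using Polynomial.coeff_eq_zero_of_natDegree_lt (Nat.lt_of_succ_le h)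

end PLaux

/-- In `A_ℓ = A(ℂP¹_θ)` the powers of `w₁` form a left (and right) Ore set, and in any
universal localization `Loc` inverting `w₁`, the unital subalgebra generated by
`y = w₁⁻¹w₂` is a commutative polynomial ring `ℂ[T]` via `T ↦ w₁⁻¹w₂`, and coincides
with the set of degree-zero elements `{ w₁⁻ᵐ x : x homogeneous of degree m }` of the
localization. -/
theorem projective_line_localization (q : ℂ) (hq : q ≠ 0)
    (Loc : Type) [Ring Loc] [Algebra ℂ Loc] (φ : PLAlg q →ₐ[ℂ] Loc) (v : Loc)
    (hv : φ (wL q 0) * v = 1) (hv' : v * φ (wL q 0) = 1)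
    (huniv : ∀ (B : Type) [Ring B] [Algebra ℂ B] (ψ : PLAlg q →ₐ[ℂ] B),
      IsUnit (ψ (wL q 0)) → ∃! χ : Loc →ₐ[ℂ] B, χ.comp φ = ψ) :
    (Set.range (fun a : PLAlg q => wL q 0 * a)
        = Set.range (fun a : PLAlg q => a * wL q 0)) ∧
      Nonempty (OreLocalization.OreSet (Submonoid.powers (wL q 0))) ∧
      (∃ Φ : Polynomial ℂ →ₐ[ℂ] Loc, Φ Polynomial.X = v * φ (wL q 1) ∧
        Function.Injective Φ ∧
        Φ.range = Algebra.adjoin ℂ {v * φ (wL q 1)}) ∧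
      ((Algebra.adjoin ℂ {v * φ (wL q 1)} : Subalgebra ℂ Loc) : Set Loc)
        = {z : Loc | ∃ (m : ℕ) (x : PLAlg q), x ∈ degPart q m ∧ z = v ^ m * φ x} := by
  classical
  -- basic relations in `Loc`
  have relLoc : φ (wL q 0) * φ (wL q 1) = (q ^ 2 : ℂ) • (φ (wL q 1) * φ (wL q 0)) := by
    have h := congrArg φ (PLaux.rel q)
    simpa only [map_mul, map_smul] using h
  have htv : φ (wL q 1) * v = (q ^ 2 : ℂ) • (v * φ (wL q 1)) := by
    have h1 := congrArg (fun z => v * z * v) relLoc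
    calc φ (wL q 1) * v = v * (φ (wL q 0) * φ (wL q 1)) * v := by
          rw [← mul_assoc, hv', one_mul]
      _ = v * ((q ^ 2 : ℂ) • (φ (wL q 1) * φ (wL q 0))) * v := by rw [relLoc]
      _ = (q ^ 2 : ℂ) • (v * φ (wL q 1)) := by
          rw [mul_smul_comm, smul_mul_assoc]
          congr 1
          rw [mul_assoc, mul_assoc, hv, mul_one]
  have htv_pow : ∀ b : ℕ, φ (wL q 1) ^ b * v = (q ^ (2 * b) : ℂ) • (v * φ (wL q 1) ^ b) := by
    intro b
    induction b with
    | zero => simp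
    | succ b ih =>
        calc φ (wL q 1) ^ (b + 1) * v = φ (wL q 1) * (φ (wL q 1) ^ b * v) := by
              rw [pow_succ', mul_assoc]
          _ = (q ^ (2 * b) : ℂ) • ((φ (wL q 1) * v) * φ (wL q 1) ^ b) := by
              rw [ih, mul_smul_comm, mul_assoc]
          _ = (q ^ (2 * b) * q ^ 2 : ℂ) • (v * φ (wL q 1) ^ (b + 1)) := by
              rw [htv, smul_mul_assoc, smul_smul, mul_assoc, ← pow_succ']
          _ = (q ^ (2 * (b + 1)) : ℂ) • (v * φ (wL q 1) ^ (b + 1)) := by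
              rw [← pow_add]
              ring_nf
  have hvu_pow : ∀ d : ℕ, v ^ d * φ (wL q 0) ^ d = 1 := by
    intro d
    induction d with
    | zero => simp
    | succ d ih =>
        calc v ^ (d + 1) * φ (wL q 0) ^ (d + 1)
            = v ^ d * ((v * φ (wL q 0)) * φ (wL q 0) ^ d) := by
              rw [pow_succ, pow_succ']
              rw [mul_assoc, mul_assoc]
          _ = 1 := by rw [hv', one_mul, ih]
  have key1 : ∀ b : ℕ, (v * φ (wL q 1)) ^ b
      = (q ^ (b * (b - 1)) : ℂ) • (v ^ b * φ (wL q 1) ^ b) := by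
    intro b
    induction b with
    | zero => simp
    | succ b ih =>
        have harith : (b + 1) * ((b + 1) - 1) = b * (b - 1) + 2 * b := by
          cases b with
          | zero => rfl
          | succ c => simp only [Nat.add_sub_cancel, Nat.succ_sub_one]; ring
        calc (v * φ (wL q 1)) ^ (b + 1)
            = ((q ^ (b * (b - 1)) : ℂ) • (v ^ b * φ (wL q 1) ^ b)) * (v * φ (wL q 1)) := by
              rw [pow_succ, ih]
          _ = (q ^ (b * (b - 1)) : ℂ) • (v ^ b * ((φ (wL q 1) ^ b * v) * φ (wL q 1))) := by
              rw [smul_mul_assoc, mul_assoc, ← mul_assoc (φ (wL q 1) ^ b)]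
          _ = (q ^ (b * (b - 1)) * q ^ (2 * b) : ℂ)
                • (v ^ b * ((v * φ (wL q 1) ^ b) * φ (wL q 1))) := by
              rw [htv_pow, smul_mul_assoc, mul_smul_comm, smul_smul]
          _ = (q ^ ((b + 1) * ((b + 1) - 1)) : ℂ) • (v ^ (b + 1) * φ (wL q 1) ^ (b + 1)) := by
              rw [← pow_add, ← harith]
              congr 1
              rw [mul_assoc v, ← pow_succ, ← mul_assoc, ← pow_succ]
  have vmul : ∀ a b : ℕ, v ^ (a + b) * (φ (wL q 0) ^ a * φ (wL q 1) ^ b)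
      = v ^ b * φ (wL q 1) ^ b := by
    intro a b
    rw [add_comm a b, pow_add, mul_assoc, ← mul_assoc (v ^ a), hvu_pow, one_mul]
  -- degPart lemmas
  have gen_mem : ∀ a b : ℕ, wL q 0 ^ a * wL q 1 ^ b ∈ degPart q (a + b) :=
    fun a b => Submodule.subset_span ⟨a, b, rfl, rfl⟩
  have shift : ∀ (d m : ℕ) (x : PLAlg q), x ∈ degPart q m →
      wL q 0 ^ d * x ∈ degPart q (d + m) := by
    intro d m x hx
    induction hx using Submodule.span_induction with
    | mem z hz =>
        obtain ⟨a, b, hab, rfl⟩ := hz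
        have h1 : wL q 0 ^ d * (wL q 0 ^ a * wL q 1 ^ b) = wL q 0 ^ (d + a) * wL q 1 ^ b := by
          rw [← mul_assoc, ← pow_add]
        rw [h1, ← hab, ← add_assoc]
        exact gen_mem (d + a) b
    | zero => rw [mul_zero]; exact zero_mem _
    | add x y _ _ hx hy => rw [mul_add]; exact add_mem hx hy
    | smul c x _ hx => rw [mul_smul_comm]; exact Submodule.smul_mem _ _ hx
  have lift : ∀ (m M : ℕ) (x : PLAlg q), m ≤ M → x ∈ degPart q m →
      ∃ x', x' ∈ degPart q M ∧ v ^ M * φ x' = v ^ m * φ x := by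
    intro m M x hmM hx
    refine ⟨wL q 0 ^ (M - m) * x, ?_, ?_⟩
    · have h := shift (M - m) m x hx
      rwa [Nat.sub_add_cancel hmM] at h
    · rw [map_mul, map_pow]
      have hvM : v ^ M = v ^ m * v ^ (M - m) := by
        rw [← pow_add, Nat.add_sub_cancel' hmM]
      rw [hvM, mul_assoc, ← mul_assoc (v ^ (M - m)), hvu_pow, one_mul]
  -- the degree-zero characterization
  have hadj : ∀ z : Loc, z ∈ Algebra.adjoin ℂ {v * φ (wL q 1)} ↔
      ∃ (m : ℕ) (x : PLAlg q), x ∈ degPart q m ∧ z = v ^ m * φ x := by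
    intro z
    constructor
    · intro hz
      have hz' : z ∈ Submodule.span ℂ ((Submonoid.powers (v * φ (wL q 1))) : Set Loc) := by
        rw [Submonoid.powers_eq_closure, ← Algebra.adjoin_eq_span]
        exact hz
      clear hz
      induction hz' using Submodule.span_induction with
      | mem z hz =>
          obtain ⟨k, rfl⟩ := hz
          refine ⟨k, (q ^ (k * (k - 1)) : ℂ) • (wL q 1 ^ k), ?_, ?_⟩
          · exact Submodule.smul_mem _ _ (by simpa using gen_mem 0 k)
          · rw [map_smul, map_pow, mul_smul_comm]
            exact key1 k
      | zero => exact ⟨0, 0, zero_mem _, by simp⟩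
      | add z₁ z₂ _ _ ih₁ ih₂ =>
          obtain ⟨m₁, x₁, h₁, rfl⟩ := ih₁
          obtain ⟨m₂, x₂, h₂, rfl⟩ := ih₂
          obtain ⟨x₁', k₁, e₁⟩ := lift m₁ (max m₁ m₂) x₁ (le_max_left _ _) h₁
          obtain ⟨x₂', k₂, e₂⟩ := lift m₂ (max m₁ m₂) x₂ (le_max_right _ _) h₂
          exact ⟨max m₁ m₂, x₁' + x₂', add_mem k₁ k₂, by rw [map_add, mul_add, e₁, e₂]⟩
      | smul c z _ ih =>
          obtain ⟨m, x₀, h₀, rfl⟩ := ih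
          exact ⟨m, c • x₀, Submodule.smul_mem _ _ h₀, by rw [map_smul, mul_smul_comm]⟩
    · rintro ⟨m, x, hx, rfl⟩
      induction hx using Submodule.span_induction with
      | mem z hz =>
          obtain ⟨a, b, hab, rfl⟩ := hz
          rw [map_mul, map_pow, map_pow, ← hab, vmul a b]
          have hne : (q ^ (b * (b - 1)) : ℂ) ≠ 0 := pow_ne_zero _ hq
          have h2 : v ^ b * φ (wL q 1) ^ b
              = (q ^ (b * (b - 1)) : ℂ)⁻¹ • (v * φ (wL q 1)) ^ b := by
            rw [key1 b, smul_smul, inv_mul_cancel₀ hne, one_smul]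
          rw [h2]
          exact Subalgebra.smul_mem _
            (Subalgebra.pow_mem _ (Algebra.self_mem_adjoin_singleton ℂ _) b) _
      | zero => rw [map_zero, mul_zero]; exact zero_mem _
      | add a b _ _ iha ihb => rw [map_add, mul_add]; exact add_mem iha ihb
      | smul c a _ iha => rw [map_smul, mul_smul_comm]; exact Subalgebra.smul_mem _ iha c
  refine ⟨?_, ⟨PLaux.oreset q hq⟩, ?_, ?_⟩
  · ext z
    simp only [Set.mem_range]
    constructor
    · rintro ⟨a, rfl⟩
      exact ⟨PLaux.scl q (q ^ 2) a, (PLaux.comm_w1 q a).symm⟩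
    · rintro ⟨a, rfl⟩
      refine ⟨PLaux.scl q (q ^ 2)⁻¹ a, ?_⟩
      rw [PLaux.comm_w1, PLaux.leftinv q hq]
  · -- the polynomial algebra
    have hunit : IsUnit ((PLaux.ψB q) (wL q 0)) := by
      rw [PLaux.ψB_w0]
      exact ⟨⟨PLaux.T1 q, PLaux.T1i q, PLaux.T1_T1i q hq, PLaux.T1i_T1 q hq⟩, rfl⟩
    obtain ⟨χ, hχ, -⟩ := huniv (Module.End ℂ PLaux.Wsp) (PLaux.ψB q) hunit
    have hχ0 : χ (φ (wL q 0)) = PLaux.T1 q := by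
      have := DFunLike.congr_fun hχ (wL q 0)
      simpa [PLaux.ψB_w0] using this
    have hχ1 : χ (φ (wL q 1)) = PLaux.T2 := by
      have := DFunLike.congr_fun hχ (wL q 1)
      simpa [PLaux.ψB_w1] using this
    have hχv : χ v = PLaux.T1i q := by
      have e1 : PLaux.T1 q * χ v = 1 := by
        rw [← hχ0, ← map_mul, hv, map_one]
      calc χ v = (PLaux.T1i q * PLaux.T1 q) * χ v := by rw [PLaux.T1i_T1 q hq, one_mul]
        _ = PLaux.T1i q * (PLaux.T1 q * χ v) := mul_assoc _ _ _
        _ = PLaux.T1i q := by rw [e1, mul_one]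
    have heq : (Polynomial.aeval (PLaux.Yop q) : Polynomial ℂ →ₐ[ℂ] Module.End ℂ PLaux.Wsp)
        = χ.comp (Polynomial.aeval (v * φ (wL q 1))) := by
      apply Polynomial.algHom_ext
      simp [map_mul, hχv, hχ1, PLaux.Yop]
    refine ⟨Polynomial.aeval (v * φ (wL q 1)), Polynomial.aeval_X _, ?_,
      (Algebra.adjoin_singleton_eq_range_aeval ℂ _).symm⟩
    intro p₁ p₂ hp
    apply PLaux.aevalY_inj q hq
    rw [heq]
    simp only [AlgHom.comp_apply, hp]
  · apply Set.ext
    intro z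
    simp only [SetLike.mem_coe, Set.mem_setOf_eq]
    exact hadj z
end
end

section
/- Fix q ∈ ℂ with q ≠ 0 and q² ≠ 1. Consider the set S of quadruples (b₁, b₂, i, j) ∈ ℂ⁴ satisfying the braided ADHM equation (1 − q⁻²)·b₁b₂ + i·j = 0 and the stability condition i ≠ 0, with the action of the multiplicative group ℂˣ given by t ▷ (b₁, b₂, i, j) = (b₁, b₂, t·i, t⁻¹·j). Then every ℂˣ-orbit in S contains exactly one quadruple with i = 1, namely (b₁, b₂, 1, (q⁻² − 1)·b₁b₂); consequently the map ℂ² → S/ℂˣ sending (b₁, b₂) to the orbit of (b₁, b₂, 1, (q⁻² − 1)·b₁b₂) is a bijection. -/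
noncomputable section

/-- The set of stable charge-one rank-one braided ADHM data: quadruples
`(b₁, b₂, i, j) ∈ ℂ⁴` with `(1 − q⁻²)b₁b₂ + ij = 0` and `i ≠ 0`. -/
def ADHM11 (q : ℂ) : Set (ℂ × ℂ × ℂ × ℂ) :=
  {p | (1 - (q ^ 2)⁻¹) * p.1 * p.2.1 + p.2.2.1 * p.2.2.2 = 0 ∧ p.2.2.1 ≠ 0}

/-- The `ℂˣ`-action `t ▷ (b₁, b₂, i, j) = (b₁, b₂, t·i, t⁻¹·j)`. -/
def actGL1 (t : ℂˣ) (p : ℂ × ℂ × ℂ × ℂ) : ℂ × ℂ × ℂ × ℂ :=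
  (p.1, p.2.1, (t : ℂ) * p.2.2.1, ((t⁻¹ : ℂˣ) : ℂ) * p.2.2.2)

/-- The orbit relation of the `ℂˣ`-action on quadruples. -/
def orbRel (p p' : ℂ × ℂ × ℂ × ℂ) : Prop := ∃ t : ℂˣ, p' = actGL1 t p

/-- The orbit relation restricted to the set of stable ADHM data. -/
def orbRelS (q : ℂ) (x y : ADHM11 q) : Prop := orbRel (x : ℂ × ℂ × ℂ × ℂ) (y : ℂ × ℂ × ℂ × ℂ)

/-- The canonical representative `(b₁, b₂, 1, (q⁻² − 1)b₁b₂)`. -/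
def canon11 (q b1 b2 : ℂ) : ℂ × ℂ × ℂ × ℂ := (b1, b2, 1, ((q ^ 2)⁻¹ - 1) * b1 * b2)

/-- The canonical representative is a stable ADHM datum. -/
lemma canon11_mem (q b1 b2 : ℂ) : canon11 q b1 b2 ∈ ADHM11 q := by
  constructor
  · show (1 - (q ^ 2)⁻¹) * b1 * b2 + 1 * (((q ^ 2)⁻¹ - 1) * b1 * b2) = 0
    ring
  · exact one_ne_zero

lemma orbRel_equiv : Equivalence orbRel := by
  constructor
  · intro p; exact ⟨1, by simp [actGL1]⟩
  · rintro p p' ⟨t, rfl⟩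
    exact ⟨t⁻¹, by simp [actGL1, mul_assoc, ← Units.val_mul]⟩
  · rintro p p' p'' ⟨t, rfl⟩ ⟨s, rfl⟩
    exact ⟨s * t, by simp [actGL1, mul_assoc, mul_left_comm, Units.val_mul, mul_inv]⟩

lemma orbRelS_equiv (q : ℂ) : Equivalence (orbRelS q) := by
  constructor
  · intro x; exact orbRel_equiv.refl _
  · intro x y h; exact orbRel_equiv.symm h
  · intro x y z h h'; exact orbRel_equiv.trans h h'

lemma orb_to_canon {q : ℂ} {p : ℂ × ℂ × ℂ × ℂ} (hp : p ∈ ADHM11 q) :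
    orbRel p (canon11 q p.1 p.2.1) := by
  obtain ⟨heq, hi⟩ := hp
  refine ⟨(Units.mk0 p.2.2.1 hi)⁻¹, ?_⟩
  have hij : p.2.2.1 * p.2.2.2 = ((q ^ 2)⁻¹ - 1) * p.1 * p.2.1 := by linear_combination heq
  simp only [canon11, actGL1, inv_inv, Units.val_inv_eq_inv_val, Units.val_mk0]
  rw [inv_mul_cancel₀ hi, hij]

/-- Every `ℂˣ`-orbit of stable charge-one ADHM data contains exactly one quadruple with
`i = 1`, namely `(b₁, b₂, 1, (q⁻² − 1)b₁b₂)`; consequently `(b₁, b₂) ↦ [the orbit of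
the canonical representative]` is a bijection from `ℂ²` onto the quotient of the set
of stable data by the `ℂˣ`-action. -/
theorem charge_one_moduli (q : ℂ) (hq : q ≠ 0) (hq2 : q ^ 2 ≠ 1) :
    (∀ p ∈ ADHM11 q,
        orbRel p (canon11 q p.1 p.2.1) ∧
        ∀ p' : ℂ × ℂ × ℂ × ℂ, orbRel p p' → p'.2.2.1 = 1 → p' = canon11 q p.1 p.2.1) ∧
      Function.Bijective
        (fun b : ℂ × ℂ =>
          Quot.mk (orbRelS q) (⟨canon11 q b.1 b.2, canon11_mem q b.1 b.2⟩ : ADHM11 q)) := by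
  constructor
  · intro p hp
    refine ⟨orb_to_canon hp, ?_⟩
    rintro p' ⟨t, rfl⟩ h1
    obtain ⟨heq, hi⟩ := hp
    have ht : (t : ℂ) * p.2.2.1 = 1 := h1
    have htinv : ((t⁻¹ : ℂˣ) : ℂ) = p.2.2.1 := by
      have h : ((t⁻¹ : ℂˣ) : ℂ) * ((t : ℂ) * p.2.2.1) = ((t⁻¹ : ℂˣ) : ℂ) := by
        rw [ht, mul_one]
      rw [← mul_assoc, Units.inv_mul, one_mul] at h
      exact h.symm
    have hij : p.2.2.1 * p.2.2.2 = ((q ^ 2)⁻¹ - 1) * p.1 * p.2.1 := by linear_combination heq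
    simp only [actGL1, canon11]
    rw [ht, htinv, hij]
  · constructor
    · intro b b' hbb'
      have h := Quot.eq.mp hbb'
      have h2 := (Equivalence.eqvGen_iff (orbRelS_equiv q)).mp h
      obtain ⟨t, ht⟩ := h2
      have h1 : b'.1 = b.1 := congrArg (fun x : ℂ × ℂ × ℂ × ℂ => x.1) ht
      have h2' : b'.2 = b.2 := congrArg (fun x : ℂ × ℂ × ℂ × ℂ => x.2.1) ht
      exact Prod.ext h1.symm h2'.symm
    · intro x
      induction x using Quot.ind with
      | _ p =>
        refine ⟨(p.1.1, p.1.2.1), ?_⟩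
        apply Quot.sound
        exact orbRel_equiv.symm (orb_to_canon p.2)
end
end
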